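/- arXiv:1701.04045 — 8 statements merged into one kernel-verified Lean document; each statement's English description precedes it below -/
import Mathlib

section
/- Let A = (Q, Σ, Δ, q0, F) be an NFA, q ∈ Q a state, and s ∈ Σ* a string. If there exist two distinct runs of A from q to q both labeled by s, then for every natural number k the number of distinct runs of A from q to q labeled by s^k is at least 2^k. -/
/-- A nondeterministic finite automaton `A = (Q, Σ, Δ, q0, F)` with state type `Q`,
alphabet `A`, transition function `δ`, initial state `q0` and accepting states `F`. -/
structure NFA' (Q A : Type*) where
  δ : Q → A → Set Q
  q0 : Q
  F : Set Q

namespace NFA'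

variable {Q A : Type*}

/-- `ρ` is a run of the automaton labeled by the word `w`: the state sequence
`ρ 0, ρ 1, …, ρ |w|` follows transitions of `M` along the letters of `w`. -/
def IsRunOn (M : NFA' Q A) (w : List A) (ρ : Fin (w.length + 1) → Q) : Prop :=
  ∀ i : Fin w.length, ρ i.succ ∈ M.δ (ρ i.castSucc) (w.get i)

/-- The set of runs of `M` from `p` to `r` labeled by the word `w`,
represented by their state sequences. -/
def Runs (M : NFA' Q A) (p r : Q) (w : List A) : Set (Fin (w.length + 1) → Q) :=
  {ρ | ρ 0 = p ∧ ρ (Fin.last w.length) = r ∧ M.IsRunOn w ρ}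

end NFA'

/-- `wordPow s k` is the `k`-fold concatenation `s^k` of the word `s`. -/
def wordPow {A : Type*} (s : List A) : ℕ → List A
  | 0 => []
  | k + 1 => s ++ wordPow s k

namespace NFAaux

open NFA'

variable {Q A : Type*}

/-- Concatenation of two state sequences. -/
def catRun {Q : Type*} (a b : ℕ) (ρ : Fin (a + 1) → Q) (σ : Fin (b + 1) → Q) :
    Fin (a + b + 1) → Q := fun i =>
  if h : (i : ℕ) ≤ a then ρ ⟨i, Nat.lt_succ_of_le h⟩
  else σ ⟨(i : ℕ) - a, by have := i.isLt; omega⟩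

lemma catRun_left {a b : ℕ} (ρ : Fin (a + 1) → Q) (σ : Fin (b + 1) → Q)
    (i : Fin (a + b + 1)) (h : (i : ℕ) ≤ a) :
    catRun a b ρ σ i = ρ ⟨i, Nat.lt_succ_of_le h⟩ := dif_pos h

lemma catRun_right {a b : ℕ} (ρ : Fin (a + 1) → Q) (σ : Fin (b + 1) → Q)
    (hq : ρ (Fin.last a) = σ 0) (i : Fin (a + b + 1)) (h : a ≤ (i : ℕ)) :
    catRun a b ρ σ i = σ ⟨(i : ℕ) - a, by have := i.isLt; omega⟩ := by
  unfold catRun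
  split_ifs with h'
  · have hia : (i : ℕ) = a := le_antisymm h' h
    have h1 : (⟨(i : ℕ), Nat.lt_succ_of_le h'⟩ : Fin (a + 1)) = Fin.last a := by
      simp [Fin.ext_iff, hia]
    have h2 : (⟨(i : ℕ) - a, by have := i.isLt; omega⟩ : Fin (b + 1)) = 0 := by
      simp [Fin.ext_iff, hia]
    rw [h1, h2, hq]
  · rfl

lemma two_mul_le (M : NFA' Q A) (q : Q) (s w : List A)
    (ρ₁ ρ₂ : Fin (s.length + 1) → Q) (h₁ : ρ₁ ∈ M.Runs q q s) (h₂ : ρ₂ ∈ M.Runs q q s)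
    (hne : ρ₁ ≠ ρ₂) :
    2 * (M.Runs q q w).encard ≤ (M.Runs q q (s ++ w)).encard := by
  have hl : (s ++ w).length = s.length + w.length := List.length_append
  -- the embedding of s.length run on `w` after s.length run `ρ` on `s`
  let F : (Fin (s.length + 1) → Q) → (Fin (w.length + 1) → Q) → (Fin ((s ++ w).length + 1) → Q) :=
    fun ρ σ i => catRun s.length w.length ρ σ ⟨(i : ℕ), by have := i.isLt; omega⟩
  have hmem : ∀ ρ ∈ M.Runs q q s, ∀ σ ∈ M.Runs q q w, F ρ σ ∈ M.Runs q q (s ++ w) := by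
    rintro ρ ⟨hρ0, hρl, hρr⟩ σ ⟨hσ0, hσl, hσr⟩
    have hqq : ρ (Fin.last s.length) = σ 0 := by rw [hρl, hσ0]
    refine ⟨?_, ?_, ?_⟩
    · show catRun s.length w.length ρ σ ⟨(0 : ℕ), _⟩ = q
      rw [catRun_left ρ σ _ (Nat.zero_le s.length)]
      rw [← hρ0]; congr 1
    · show catRun s.length w.length ρ σ ⟨((Fin.last (s ++ w).length : Fin _) : ℕ), _⟩ = q
      rw [catRun_right ρ σ hqq _ (by simp [Fin.last, hl])]
      rw [← hσl]; congr 1; simp [Fin.ext_iff, Fin.last, hl]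
    · intro j
      have hj : (j : ℕ) < s.length + w.length := by have := j.isLt; omega
      by_cases hja : (j : ℕ) < s.length
      · have e1 : F ρ σ j.succ = ρ ⟨(j : ℕ) + 1, by omega⟩ :=
          catRun_left ρ σ _ (by simpa [Fin.succ] using hja)
        have e2 : F ρ σ j.castSucc = ρ ⟨(j : ℕ), by omega⟩ :=
          catRun_left ρ σ _ (by simp [Fin.castSucc, Fin.castAdd, Fin.castLE]; omega)
        have e3 : (s ++ w).get j = s.get ⟨(j : ℕ), hja⟩ := by
          simp [List.get_eq_getElem, List.getElem_append_left hja]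
        rw [e1, e2, e3]
        have := hρr ⟨(j : ℕ), hja⟩
        simpa [Fin.succ, Fin.castSucc, Fin.castAdd, Fin.castLE] using this
      · push_neg at hja
        have e1 : F ρ σ j.succ = σ ⟨(j : ℕ) + 1 - s.length, by omega⟩ :=
          catRun_right ρ σ hqq _ (by simp [Fin.succ]; omega)
        have e2 : F ρ σ j.castSucc = σ ⟨(j : ℕ) - s.length, by omega⟩ :=
          catRun_right ρ σ hqq _ (by simp [Fin.castSucc, Fin.castAdd, Fin.castLE]; omega)
        have e3 : (s ++ w).get j = w.get ⟨(j : ℕ) - s.length, by omega⟩ := by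
          simp [List.get_eq_getElem, List.getElem_append_right hja]
        rw [e1, e2, e3]
        have := hσr ⟨(j : ℕ) - s.length, by omega⟩
        have h1 : (⟨(j : ℕ) + 1 - s.length, by omega⟩ : Fin (w.length + 1)) =
            Fin.succ ⟨(j : ℕ) - s.length, by omega⟩ := by
          simp [Fin.ext_iff, Fin.succ]; omega
        have h2 : (⟨(j : ℕ) - s.length, by omega⟩ : Fin (w.length + 1)) =
            Fin.castSucc ⟨(j : ℕ) - s.length, by omega⟩ := by
          simp [Fin.ext_iff, Fin.castSucc, Fin.castAdd, Fin.castLE]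
        rw [h1, h2]; exact this
  -- recovering the pieces
  have hFleft : ∀ (ρ : Fin (s.length + 1) → Q) (σ : Fin (w.length + 1) → Q) (i : Fin (s.length + 1)),
      F ρ σ ⟨(i : ℕ), by have := i.isLt; omega⟩ = ρ i := by
    intro ρ σ i
    have hi : (i : ℕ) ≤ s.length := by have := i.isLt; omega
    show catRun s.length w.length ρ σ ⟨(i : ℕ), _⟩ = ρ i
    rw [catRun_left ρ σ ⟨(i : ℕ), by omega⟩ hi]
  have hFright : ∀ (ρ : Fin (s.length + 1) → Q) (σ : Fin (w.length + 1) → Q), ρ (Fin.last s.length) = σ 0 →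
      ∀ i : Fin (w.length + 1), F ρ σ ⟨s.length + (i : ℕ), by have := i.isLt; omega⟩ = σ i := by
    intro ρ σ hqq i
    show catRun s.length w.length ρ σ ⟨s.length + (i : ℕ), _⟩ = σ i
    rw [catRun_right ρ σ hqq ⟨s.length + (i : ℕ), by have := i.isLt; omega⟩ (Nat.le_add_right s.length i)]
    exact congrArg σ (Fin.ext (by simp))
  -- injectivity in the second argument
  have hinj : ∀ ρ : Fin (s.length + 1) → Q, ρ (Fin.last s.length) = q →
      Set.InjOn (F ρ) (M.Runs q q w) := by
    intro ρ hρl σ hσ σ' hσ' hFF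
    have hqq : ρ (Fin.last s.length) = σ 0 := by rw [hρl, hσ.1]
    have hqq' : ρ (Fin.last s.length) = σ' 0 := by rw [hρl, hσ'.1]
    funext i
    rw [← hFright ρ σ hqq i, ← hFright ρ σ' hqq' i, hFF]
  -- the two images are disjoint
  have hdisj : Disjoint ((F ρ₁) '' (M.Runs q q w)) ((F ρ₂) '' (M.Runs q q w)) := by
    rw [Set.disjoint_left]
    rintro x ⟨σ, hσ, rfl⟩ ⟨σ', hσ', hx⟩
    apply hne
    funext i
    rw [← hFleft ρ₁ σ i, ← hFleft ρ₂ σ' i, hx]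
  calc 2 * (M.Runs q q w).encard
      = (M.Runs q q w).encard + (M.Runs q q w).encard := two_mul _
    _ = ((F ρ₁) '' (M.Runs q q w)).encard + ((F ρ₂) '' (M.Runs q q w)).encard := by
        rw [(hinj ρ₁ h₁.2.1).encard_image, (hinj ρ₂ h₂.2.1).encard_image]
    _ = (((F ρ₁) '' (M.Runs q q w)) ∪ ((F ρ₂) '' (M.Runs q q w))).encard :=
        (Set.encard_union_eq hdisj).symm
    _ ≤ (M.Runs q q (s ++ w)).encard := by
        apply Set.encard_le_encard
        rintro x (⟨σ, hσ, rfl⟩ | ⟨σ, hσ, rfl⟩)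
        · exact hmem ρ₁ h₁ σ hσ
        · exact hmem ρ₂ h₂ σ hσ

end NFAaux

/-- If there are two distinct runs of `M` from `q` to `q` both labeled by `s`, then
for every `k` the number of distinct runs from `q` to `q` labeled by `s^k` is at least `2^k`. -/
theorem two_loops_exponential_runs {Q A : Type*} (M : NFA' Q A) (q : Q) (s : List A)
    (h : ∃ ρ₁ ρ₂, ρ₁ ∈ M.Runs q q s ∧ ρ₂ ∈ M.Runs q q s ∧ ρ₁ ≠ ρ₂) :
    ∀ k : ℕ, (2 ^ k : ℕ∞) ≤ (M.Runs q q (wordPow s k)).encard := by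
  obtain ⟨ρ₁, ρ₂, h₁, h₂, hne⟩ := h
  intro k
  induction k with
  | zero =>
      rw [pow_zero]
      rw [Set.one_le_encard_iff_nonempty]
      exact ⟨fun _ => q, rfl, rfl, fun i => i.elim0⟩
  | succ k ih =>
      calc (2 : ℕ∞) ^ (k + 1) = 2 * 2 ^ k := by rw [pow_succ, mul_comm]
        _ ≤ 2 * (M.Runs q q (wordPow s k)).encard := mul_le_mul_right ih 2
        _ ≤ (M.Runs q q (s ++ wordPow s k)).encard :=
            NFAaux.two_mul_le M q s (wordPow s k) ρ₁ ρ₂ h₁ h₂ hne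
        _ = (M.Runs q q (wordPow s (k + 1))).encard := rfl
end

section
/- Let A = (Q, Σ, Δ, q0, F) be an NFA, q ∈ Q a state, and s ∈ Σ* a string such that there exist two distinct runs of A from q to q both labeled by s. Then for every state p ∈ Q and every string w ∈ Σ*, the number of distinct runs of A from p to q labeled by the concatenation w·s is at least twice the number of distinct runs of A from p to q labeled by w. -/
section Aux

variable {Q A : Type*}

/-- Glue two state sequences, the second starting where the first ends. -/
def glue (m n : ℕ) (ρ : Fin (m + 1) → Q) (σ : Fin (n + 1) → Q) : Fin (m + n + 1) → Q :=
  fun i => if h : (i : ℕ) ≤ m then ρ ⟨i, by omega⟩ else σ ⟨(i : ℕ) - m, by omega⟩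

lemma glue_left (m n : ℕ) (ρ : Fin (m + 1) → Q) (σ : Fin (n + 1) → Q)
    (i : ℕ) (hi : i ≤ m) (hi' : i < m + n + 1) :
    glue m n ρ σ ⟨i, hi'⟩ = ρ ⟨i, by omega⟩ := dif_pos hi

lemma glue_right (m n : ℕ) (ρ : Fin (m + 1) → Q) (σ : Fin (n + 1) → Q)
    (hq : ρ (Fin.last m) = σ 0) (j : ℕ) (hj : j ≤ n) :
    glue m n ρ σ ⟨m + j, by omega⟩ = σ ⟨j, by omega⟩ := by
  rcases Nat.eq_zero_or_pos j with rfl | hj0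
  · rw [glue_left m n ρ σ (m + 0) (by omega)]
    have : (⟨m + 0, by omega⟩ : Fin (m + 1)) = Fin.last m := by ext; simp
    rw [this, hq]
    congr 1
  · have : ¬ (m + j ≤ m) := by omega
    rw [glue, dif_neg]
    · congr 1
      ext; simp
    · simpa using this

lemma glue_inj (m n : ℕ) (ρ ρ' : Fin (m + 1) → Q) (σ σ' : Fin (n + 1) → Q) (q : Q)
    (hq : ρ (Fin.last m) = q) (hq' : ρ' (Fin.last m) = q)
    (hs : σ 0 = q) (hs' : σ' 0 = q)
    (hg : glue m n ρ σ = glue m n ρ' σ') : ρ = ρ' ∧ σ = σ' := by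
  constructor
  · funext i
    have := congrFun hg ⟨i, by omega⟩
    rwa [glue_left m n ρ σ i (by omega), glue_left m n ρ' σ' i (by omega)] at this
  · funext j
    have := congrFun hg ⟨m + j, by omega⟩
    rwa [glue_right m n ρ σ (by rw [hq, hs]) j (by omega),
      glue_right m n ρ' σ' (by rw [hq', hs']) j (by omega)] at this

/-- The concatenation of a run on `w` with a run on `s`, as a run on `w ++ s`. -/
def concatRun (w s : List A) (ρ : Fin (w.length + 1) → Q) (σ : Fin (s.length + 1) → Q) :
    Fin ((w ++ s).length + 1) → Q :=
  fun i => glue w.length s.length ρ σ ⟨i, by have := i.isLt; simp at this; omega⟩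

lemma concatRun_mem {M : NFA' Q A} {p q r : Q} {w s : List A}
    {ρ : Fin (w.length + 1) → Q} {σ : Fin (s.length + 1) → Q}
    (hρ : ρ ∈ M.Runs p q w) (hσ : σ ∈ M.Runs q r s) :
    concatRun w s ρ σ ∈ M.Runs p r (w ++ s) := by
  obtain ⟨hρ0, hρl, hρr⟩ := hρ
  obtain ⟨hσ0, hσl, hσr⟩ := hσ
  have hq : ρ (Fin.last w.length) = σ 0 := by rw [hρl, hσ0]
  refine ⟨?_, ?_, ?_⟩
  · show glue _ _ ρ σ ⟨((0 : Fin ((w ++ s).length + 1)) : ℕ), _⟩ = p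
    simp only [Fin.val_zero]
    rw [glue_left w.length s.length ρ σ 0 (by omega)]
    convert hρ0 using 2 <;> ext <;> simp
  · show glue _ _ ρ σ _ = r
    have h1 : ((Fin.last (w ++ s).length : Fin _) : ℕ) = w.length + s.length := by simp
    have : (⟨((Fin.last (w ++ s).length : Fin _) : ℕ), by omega⟩ : Fin (w.length + s.length + 1))
        = ⟨w.length + s.length, by omega⟩ := by ext; simp
    rw [show (glue w.length s.length ρ σ
        ⟨((Fin.last (w ++ s).length : Fin _) : ℕ), by omega⟩) =
        glue w.length s.length ρ σ ⟨w.length + s.length, by omega⟩ from by rw [this],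
      glue_right w.length s.length ρ σ hq s.length le_rfl]
    have : (⟨s.length, by omega⟩ : Fin (s.length + 1)) = Fin.last s.length := rfl
    rw [this, hσl]
  · intro i
    have hi : (i : ℕ) < w.length + s.length := by have := i.isLt; simpa using this
    show glue _ _ ρ σ ⟨(i.succ : ℕ), _⟩ ∈ M.δ (glue _ _ ρ σ ⟨(i.castSucc : ℕ), _⟩) _
    have hsval : ((i.succ : Fin ((w ++ s).length + 1)) : ℕ) = (i : ℕ) + 1 := rfl
    have hcval : ((i.castSucc : Fin ((w ++ s).length + 1)) : ℕ) = (i : ℕ) := rfl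
    rcases lt_or_ge (i : ℕ) w.length with hlt | hge
    · have hget : (w ++ s).get i = w.get ⟨i, hlt⟩ := by
        simp [List.getElem_append, hlt]
      rw [show (⟨((i.succ : Fin _) : ℕ), by omega⟩ : Fin (w.length + s.length + 1)) =
          ⟨(i : ℕ) + 1, by omega⟩ from by ext; simp [hsval],
        show (⟨((i.castSucc : Fin _) : ℕ), by omega⟩ : Fin (w.length + s.length + 1)) =
          ⟨(i : ℕ), by omega⟩ from by ext; simp [hcval],
        glue_left w.length s.length ρ σ ((i : ℕ) + 1) (by omega),
        glue_left w.length s.length ρ σ (i : ℕ) (by omega), hget]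
      have := hρr ⟨(i : ℕ), hlt⟩
      convert this using 2 <;> rfl
    · obtain ⟨j, hj, hij⟩ : ∃ j, j < s.length ∧ (i : ℕ) = w.length + j :=
        ⟨(i : ℕ) - w.length, by omega, by omega⟩
      have hget : (w ++ s).get i = s.get ⟨j, hj⟩ := by
        have h1 : ¬ ((i : ℕ) < w.length) := by omega
        simp only [List.get_eq_getElem, List.getElem_append, dif_neg h1]
        congr 1
        omega
      rw [show (⟨((i.succ : Fin _) : ℕ), by omega⟩ : Fin (w.length + s.length + 1)) =
          ⟨w.length + (j + 1), by omega⟩ from by ext; simp [hsval]; omega,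
        show (⟨((i.castSucc : Fin _) : ℕ), by omega⟩ : Fin (w.length + s.length + 1)) =
          ⟨w.length + j, by omega⟩ from by ext; simp [hcval, hij],
        glue_right w.length s.length ρ σ hq (j + 1) (by omega),
        glue_right w.length s.length ρ σ hq j (by omega), hget]
      have := hσr ⟨j, hj⟩
      convert this using 2 <;> rfl

lemma concatRun_inj {q : Q} {w s : List A}
    {ρ ρ' : Fin (w.length + 1) → Q} {σ σ' : Fin (s.length + 1) → Q}
    (hq : ρ (Fin.last w.length) = q) (hq' : ρ' (Fin.last w.length) = q)
    (hs : σ 0 = q) (hs' : σ' 0 = q)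
    (hg : concatRun w s ρ σ = concatRun w s ρ' σ') : ρ = ρ' ∧ σ = σ' := by
  apply glue_inj w.length s.length ρ ρ' σ σ' q hq hq' hs hs'
  funext k
  have hk : (k : ℕ) < (w ++ s).length + 1 := by have := k.isLt; simp only [List.length_append]; omega
  have := congrFun hg ⟨(k : ℕ), hk⟩
  simpa [concatRun] using this

end Aux

/-- If there are two distinct runs of `M` from `q` to `q` both labeled by `s`, then for
every state `p` and word `w`, the number of runs from `p` to `q` labeled by `w · s` is at
least twice the number of runs from `p` to `q` labeled by `w`. -/
theorem runs_append_loop_doubles {Q A : Type*} (M : NFA' Q A) (q : Q) (s : List A)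
    (h : ∃ ρ₁ ρ₂, ρ₁ ∈ M.Runs q q s ∧ ρ₂ ∈ M.Runs q q s ∧ ρ₁ ≠ ρ₂) :
    ∀ (p : Q) (w : List A),
      2 * (M.Runs p q w).encard ≤ (M.Runs p q (w ++ s)).encard := by
  obtain ⟨σ₁, σ₂, hσ₁, hσ₂, hne⟩ := h
  intro p w
  set R := M.Runs p q w with hR
  set f1 : (Fin (w.length + 1) → Q) → (Fin ((w ++ s).length + 1) → Q) :=
    fun ρ => concatRun w s ρ σ₁ with hf1
  set f2 : (Fin (w.length + 1) → Q) → (Fin ((w ++ s).length + 1) → Q) :=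
    fun ρ => concatRun w s ρ σ₂ with hf2
  have hsub1 : f1 '' R ⊆ M.Runs p q (w ++ s) := by
    rintro _ ⟨ρ, hρ, rfl⟩; exact concatRun_mem hρ hσ₁
  have hsub2 : f2 '' R ⊆ M.Runs p q (w ++ s) := by
    rintro _ ⟨ρ, hρ, rfl⟩; exact concatRun_mem hρ hσ₂
  have hinj1 : Set.InjOn f1 R := by
    intro ρ hρ ρ' hρ' heq
    exact (concatRun_inj hρ.2.1 hρ'.2.1 hσ₁.1 hσ₁.1 heq).1
  have hinj2 : Set.InjOn f2 R := by
    intro ρ hρ ρ' hρ' heq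
    exact (concatRun_inj hρ.2.1 hρ'.2.1 hσ₂.1 hσ₂.1 heq).1
  have hdisj : Disjoint (f1 '' R) (f2 '' R) := by
    rw [Set.disjoint_left]
    rintro _ ⟨ρ, hρ, rfl⟩ ⟨ρ', hρ', heq⟩
    exact hne ((concatRun_inj hρ'.2.1 hρ.2.1 hσ₂.1 hσ₁.1 heq).2).symm
  calc 2 * R.encard = R.encard + R.encard := two_mul _
    _ = (f1 '' R).encard + (f2 '' R).encard := by
        rw [hinj1.encard_image, hinj2.encard_image]
    _ = (f1 '' R ∪ f2 '' R).encard := (Set.encard_union_eq hdisj).symm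
    _ ≤ (M.Runs p q (w ++ s)).encard :=
        Set.encard_mono (Set.union_subset hsub1 hsub2)
end

section
/- Let A = (Q, Σ, Δ, q0, F) be an NFA. Suppose there exist states q ∈ Q (the pivot) and q_r ∈ Q \ F, and strings s0, s, s1 ∈ Σ* such that: (i) there is a run of A from q0 to q labeled by s0 (the attack prefix), (ii) there exist two distinct runs of A from q to q both labeled by s (the attack core), and (iii) there is a run of A from q to q_r labeled by s1 (the attack suffix). Then for every natural number k, the number of distinct runs of A from q0 to q_r labeled by the concatenation s0·s^k·s1 is at least 2^k. -/
section Aux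

variable {Q A : Type*}

def runAppend {w v : List A} (ρ : Fin (w.length + 1) → Q) (σ : Fin (v.length + 1) → Q) :
    Fin ((w ++ v).length + 1) → Q := fun i =>
  if h : (i : ℕ) ≤ w.length then ρ ⟨i, by omega⟩
  else σ ⟨(i : ℕ) - w.length, by
    have := i.isLt; simp only [List.length_append] at this; omega⟩

lemma runAppend_apply_le {w v : List A} (ρ : Fin (w.length + 1) → Q)
    (σ : Fin (v.length + 1) → Q) (j : Fin ((w ++ v).length + 1)) (h : (j : ℕ) ≤ w.length) :
    runAppend ρ σ j = ρ ⟨j, by omega⟩ := dif_pos h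

lemma runAppend_apply_gt {w v : List A} (ρ : Fin (w.length + 1) → Q)
    (σ : Fin (v.length + 1) → Q) (j : Fin ((w ++ v).length + 1)) (h : ¬ (j : ℕ) ≤ w.length) :
    runAppend ρ σ j = σ ⟨(j : ℕ) - w.length, by
      have := j.isLt; simp only [List.length_append] at this; omega⟩ := dif_neg h

lemma runAppend_mem {M : NFA' Q A} {p x r : Q} {w v : List A}
    {ρ : Fin (w.length + 1) → Q} {σ : Fin (v.length + 1) → Q}
    (hρ : ρ ∈ M.Runs p x w) (hσ : σ ∈ M.Runs x r v) :
    runAppend ρ σ ∈ M.Runs p r (w ++ v) := by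
  obtain ⟨hρ0, hρl, hρr⟩ := hρ
  obtain ⟨hσ0, hσl, hσr⟩ := hσ
  refine ⟨?_, ?_, ?_⟩
  · rw [runAppend_apply_le ρ σ 0 (by simp)]
    rw [← hρ0]
    congr 1 <;> try (ext; simp)
  · rcases Nat.eq_zero_or_pos v.length with h0 | h0
    · rw [runAppend_apply_le ρ σ _ (by simp [Fin.last, h0])]
      have e : (⟨(Fin.last (w ++ v).length : ℕ), by simp [h0]⟩ : Fin (w.length + 1)) =
          Fin.last w.length := by ext; simp [h0]
      rw [e, hρl]
      have e2 : (Fin.last v.length) = (0 : Fin (v.length + 1)) := by ext; simp [h0]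
      rw [e2, hσ0] at hσl
      exact hσl
    · rw [runAppend_apply_gt ρ σ _ (by simp only [Fin.val_last, List.length_append]; omega)]
      have e : (⟨(Fin.last (w ++ v).length : ℕ) - w.length, by
          have := (Fin.last (w ++ v).length).isLt
          simp only [List.length_append] at this; omega⟩ : Fin (v.length + 1)) =
          Fin.last v.length := by ext; simp
      rw [e, hσl]
  · intro i
    have hi := i.isLt
    simp only [List.length_append] at hi
    have hsucc : ((i.succ : Fin ((w ++ v).length + 1)) : ℕ) = (i : ℕ) + 1 := rfl
    have hcast : ((i.castSucc : Fin ((w ++ v).length + 1)) : ℕ) = (i : ℕ) := rfl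
    rcases lt_trichotomy (i : ℕ) w.length with h | h | h
    · have hget : (w ++ v).get i = w.get ⟨i, h⟩ := by
        show (w ++ v)[(i : ℕ)] = w[(i : ℕ)]
        exact List.getElem_append_left h
      rw [hget, runAppend_apply_le ρ σ i.succ (by omega),
        runAppend_apply_le ρ σ i.castSucc (by omega)]
      have := hρr ⟨i, h⟩
      have e1 : (⟨((i.succ : Fin ((w ++ v).length + 1)) : ℕ), by omega⟩ : Fin (w.length + 1)) =
          (⟨(i : ℕ), h⟩ : Fin w.length).succ := by ext; simp [hsucc]
      have e2 : (⟨((i.castSucc : Fin ((w ++ v).length + 1)) : ℕ), by omega⟩ :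
          Fin (w.length + 1)) = (⟨(i : ℕ), h⟩ : Fin w.length).castSucc := by ext; simp [hcast]
      rw [e1, e2]
      exact this
    · have hv : 0 < v.length := by omega
      have hget : (w ++ v).get i = v.get ⟨0, hv⟩ := by
        show (w ++ v)[(i : ℕ)] = v[(0 : ℕ)]
        rw [List.getElem_append_right (by omega)]
        congr 1; omega
      rw [hget, runAppend_apply_gt ρ σ i.succ (by omega),
        runAppend_apply_le ρ σ i.castSucc (by omega)]
      have := hσr ⟨0, hv⟩
      have e1 : (⟨((i.succ : Fin ((w ++ v).length + 1)) : ℕ) - w.length, by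
          have := (i.succ : Fin ((w ++ v).length + 1)).isLt
          simp only [List.length_append] at this; omega⟩ : Fin (v.length + 1)) =
          (⟨0, hv⟩ : Fin v.length).succ := by ext; simp [hsucc, h]
      have e2 : (⟨((i.castSucc : Fin ((w ++ v).length + 1)) : ℕ), by omega⟩ :
          Fin (w.length + 1)) = Fin.last w.length := by ext; simp [hcast, h]
      rw [e1, e2, hρl, ← hσ0]
      have e3 : (0 : Fin (v.length + 1)) = (⟨0, hv⟩ : Fin v.length).castSucc := by ext; simp
      rw [e3]
      exact this
    · have hget : (w ++ v).get i = v.get ⟨(i : ℕ) - w.length, by omega⟩ := by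
        show (w ++ v)[(i : ℕ)] = v[(i : ℕ) - w.length]
        exact List.getElem_append_right (by omega)
      rw [hget, runAppend_apply_gt ρ σ i.succ (by omega),
        runAppend_apply_gt ρ σ i.castSucc (by omega)]
      have := hσr ⟨(i : ℕ) - w.length, by omega⟩
      have e1 : (⟨((i.succ : Fin ((w ++ v).length + 1)) : ℕ) - w.length, by
          have := (i.succ : Fin ((w ++ v).length + 1)).isLt
          simp only [List.length_append] at this; omega⟩ : Fin (v.length + 1)) =
          (⟨(i : ℕ) - w.length, by omega⟩ : Fin v.length).succ := by
        ext; simp [hsucc]; omega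
      have e2 : (⟨((i.castSucc : Fin ((w ++ v).length + 1)) : ℕ) - w.length, by
          have := (i.castSucc : Fin ((w ++ v).length + 1)).isLt
          simp only [List.length_append] at this; omega⟩ : Fin (v.length + 1)) =
          (⟨(i : ℕ) - w.length, by omega⟩ : Fin v.length).castSucc := by
        ext; simp [hcast]
      rw [e1, e2]
      exact this

lemma runAppend_left_inj {w v : List A}
    {ρ ρ' : Fin (w.length + 1) → Q} {σ σ' : Fin (v.length + 1) → Q}
    (h : runAppend ρ σ = runAppend ρ' σ') : ρ = ρ' := by
  funext i
  have hi := i.isLt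
  have hh := congrFun h ⟨(i : ℕ), by simp; omega⟩
  rw [runAppend_apply_le ρ σ _ (by simpa using by omega),
    runAppend_apply_le ρ' σ' _ (by simpa using by omega)] at hh
  simpa using hh

lemma runAppend_right_inj {w v : List A}
    {ρ ρ' : Fin (w.length + 1) → Q} {σ σ' : Fin (v.length + 1) → Q}
    (h0 : σ 0 = σ' 0) (h : runAppend ρ σ = runAppend ρ' σ') : σ = σ' := by
  funext j
  rcases Nat.eq_zero_or_pos (j : ℕ) with hj | hj
  · have : j = 0 := by ext; simp [hj]
    rw [this]; exact h0
  · have hjl := j.isLt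
    have hh := congrFun h ⟨w.length + (j : ℕ), by simp; omega⟩
    rw [runAppend_apply_gt ρ σ ⟨w.length + (j : ℕ), by simp; omega⟩
        (by show ¬ (w.length + (j : ℕ) ≤ w.length); omega),
      runAppend_apply_gt ρ' σ' ⟨w.length + (j : ℕ), by simp; omega⟩
        (by show ¬ (w.length + (j : ℕ) ≤ w.length); omega)] at hh
    simpa using hh

variable (q : Q)

def loops {s : List A} (ρ₁ ρ₂ : Fin (s.length + 1) → Q) :
    ∀ k, (Fin k → Bool) → Fin ((wordPow s k).length + 1) → Q
  | 0, _ => fun _ => q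
  | k + 1, b => runAppend (if b 0 then ρ₁ else ρ₂) (loops ρ₁ ρ₂ k (fun i => b i.succ))

variable {M : NFA' Q A} {s : List A} {ρ₁ ρ₂ : Fin (s.length + 1) → Q}

lemma loops_mem (h₁ : ρ₁ ∈ M.Runs q q s) (h₂ : ρ₂ ∈ M.Runs q q s) (k : ℕ)
    (b : Fin k → Bool) : loops q ρ₁ ρ₂ k b ∈ M.Runs q q (wordPow s k) := by
  induction k with
  | zero => exact ⟨rfl, rfl, fun i => i.elim0⟩
  | succ k ih => exact runAppend_mem (by split <;> assumption) (ih _)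

lemma loops_inj (h₁ : ρ₁ ∈ M.Runs q q s) (h₂ : ρ₂ ∈ M.Runs q q s) (hne : ρ₁ ≠ ρ₂) (k : ℕ)
    {b b' : Fin k → Bool} (h : loops q ρ₁ ρ₂ k b = loops q ρ₁ ρ₂ k b') : b = b' := by
  induction k with
  | zero => funext i; exact i.elim0
  | succ k ih =>
      have hl := runAppend_left_inj h
      have h0 : b 0 = b' 0 := by
        by_contra hc
        cases hb : b 0 <;> cases hb' : b' 0 <;>
          simp [hb, hb'] at hc hl <;> first | exact hne hl.symm | exact hne hl
      have hstart : loops q ρ₁ ρ₂ k (fun i => b i.succ) 0 =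
          loops q ρ₁ ρ₂ k (fun i => b' i.succ) 0 := by
        rw [(loops_mem q h₁ h₂ k _).1, (loops_mem q h₁ h₂ k _).1]
      have htail := ih (runAppend_right_inj hstart h)
      funext i
      induction i using Fin.cases with
      | zero => exact h0
      | succ j => exact congrFun htail j

end Aux

/-- If `M` has a pivot state `q` reachable from `q0` via `s0`, two distinct loops at `q`
labeled by the attack core `s`, and a path from `q` to a non-accepting state `q_r` labeled
by `s1`, then the number of distinct runs from `q0` to `q_r` labeled by `s0 · s^k · s1`
is at least `2^k`. -/
theorem hyperVulnerable_exponential_runs {Q A : Type*} (M : NFA' Q A) (q qr : Q)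
    (hqr : qr ∉ M.F) (s₀ s s₁ : List A)
    (hpre : (M.Runs M.q0 q s₀).Nonempty)
    (hcore : ∃ ρ₁ ρ₂, ρ₁ ∈ M.Runs q q s ∧ ρ₂ ∈ M.Runs q q s ∧ ρ₁ ≠ ρ₂)
    (hsuf : (M.Runs q qr s₁).Nonempty) :
    ∀ k : ℕ, (2 ^ k : ℕ∞) ≤ (M.Runs M.q0 qr (s₀ ++ wordPow s k ++ s₁)).encard := by
  obtain ⟨ρ₀, hρ₀⟩ := hpre
  obtain ⟨ρ₁, ρ₂, h₁, h₂, hne⟩ := hcore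
  obtain ⟨ρs, hρs⟩ := hsuf
  intro k
  set f : (Fin k → Bool) → Fin ((s₀ ++ wordPow s k ++ s₁).length + 1) → Q :=
    fun b => runAppend (runAppend ρ₀ (loops q ρ₁ ρ₂ k b)) ρs with hf
  have hmem : ∀ b, f b ∈ M.Runs M.q0 qr (s₀ ++ wordPow s k ++ s₁) :=
    fun b => runAppend_mem (runAppend_mem hρ₀ (loops_mem q h₁ h₂ k b)) hρs
  have hinj : Function.Injective f := by
    intro b b' hbb
    have h1 := runAppend_left_inj hbb
    have hstart : loops q ρ₁ ρ₂ k b 0 = loops q ρ₁ ρ₂ k b' 0 := by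
      rw [(loops_mem q h₁ h₂ k _).1, (loops_mem q h₁ h₂ k _).1]
    exact loops_inj q h₁ h₂ hne k (runAppend_right_inj hstart h1)
  calc (2 ^ k : ℕ∞) = (Set.univ : Set (Fin k → Bool)).encard := by
        rw [Set.encard_univ]
        simp [ENat.card_eq_coe_fintype_card]
    _ = (f '' Set.univ).encard := (Set.InjOn.encard_image (hinj.injOn)).symm
    _ ≤ _ := Set.encard_le_encard (by rintro _ ⟨b, -, rfl⟩; exact hmem b)
end

section
/- Let A = (Q, Σ, Δ, q0, F) be an NFA, q, q' ∈ Q states, and s ∈ Σ* a string. Suppose there exist a run π1 of A from q to q labeled by s, a run π2 of A from q to q' labeled by s with π1 ≠ π2, and a run π3 of A from q' to q' labeled by s. Then for every natural number k ≥ 1, the number of distinct runs of A from q to q' labeled by s^k is at least k. -/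
namespace NFA'

variable {Q A : Type*}

/-- Glue two runs into a run on the concatenated word. -/
def glue {w₁ w₂ : List A} (ρ₁ : Fin (w₁.length + 1) → Q) (ρ₂ : Fin (w₂.length + 1) → Q) :
    Fin ((w₁ ++ w₂).length + 1) → Q := fun t =>
  if h : (t : ℕ) < w₁.length then ρ₁ ⟨t, by omega⟩
  else ρ₂ ⟨(t : ℕ) - w₁.length, by
    have ht := t.isLt
    have := (List.length_append : (w₁ ++ w₂).length = w₁.length + w₂.length)
    omega⟩

theorem glue_mem {M : NFA' Q A} {p m r : Q} {w₁ w₂ : List A}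
    {ρ₁ : Fin (w₁.length + 1) → Q} {ρ₂ : Fin (w₂.length + 1) → Q}
    (h₁ : ρ₁ ∈ M.Runs p m w₁) (h₂ : ρ₂ ∈ M.Runs m r w₂) :
    glue ρ₁ ρ₂ ∈ M.Runs p r (w₁ ++ w₂) := by
  obtain ⟨ha1, hb1, hr1⟩ := h₁
  obtain ⟨ha2, hb2, hr2⟩ := h₂
  have hlen : (w₁ ++ w₂).length = w₁.length + w₂.length := List.length_append
  refine ⟨?_, ?_, ?_⟩
  · show glue ρ₁ ρ₂ 0 = p
    unfold glue
    by_cases h : 0 < w₁.length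
    · rw [dif_pos (by simpa using h)]
      convert ha1 using 2
      exact Fin.ext (by simp)
    · rw [dif_neg (by simpa using h)]
      have hw : w₁.length = 0 := by omega
      have : p = m := by
        rw [← ha1, ← hb1]
        congr 1
        ext
        simp [hw]
      rw [this, ← ha2]
      congr 1
      ext
      simp
  · show glue ρ₁ ρ₂ (Fin.last _) = r
    unfold glue
    have hv : ((Fin.last (w₁ ++ w₂).length : Fin _) : ℕ) = w₁.length + w₂.length := by
      simp [Fin.last, hlen]
    rw [dif_neg (by omega)]
    rw [← hb2]
    congr 1
    ext
    simp [hv, Fin.last]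
  · intro i
    have hi : (i : ℕ) < w₁.length + w₂.length := by
      have := i.isLt; omega
    by_cases h : (i : ℕ) < w₁.length
    · have hget : (w₁ ++ w₂).get i = w₁.get ⟨i, h⟩ := by
        simp only [List.get_eq_getElem]
        exact List.getElem_append_left h
      have hcast : glue ρ₁ ρ₂ i.castSucc = ρ₁ (Fin.castSucc ⟨i, h⟩) := by
        unfold glue
        rw [dif_pos (by simpa using h)]
        congr 1
      have hsucc : glue ρ₁ ρ₂ i.succ = ρ₁ (Fin.succ ⟨i, h⟩) := by
        unfold glue
        by_cases h' : (i : ℕ) + 1 < w₁.length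
        · rw [dif_pos (by simpa using h')]
          congr 1
        · have hv : (i : ℕ) + 1 = w₁.length := by omega
          rw [dif_neg (by simp; omega)]
          have e1 : Fin.succ ⟨(i : ℕ), h⟩ = Fin.last w₁.length := by
            ext; simp [Fin.last, hv]
          rw [e1, hb1, ← ha2]
          congr 1
          ext
          simp [hv]
      rw [hget, hcast, hsucc]
      exact hr1 ⟨i, h⟩
    · have h' : w₁.length ≤ (i : ℕ) := by omega
      have hlt : (i : ℕ) - w₁.length < w₂.length := by omega
      have hget : (w₁ ++ w₂).get i = w₂.get ⟨(i : ℕ) - w₁.length, hlt⟩ := by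
        simp only [List.get_eq_getElem]
        exact List.getElem_append_right (by omega)
      have hcast : glue ρ₁ ρ₂ i.castSucc = ρ₂ (Fin.castSucc ⟨(i : ℕ) - w₁.length, hlt⟩) := by
        unfold glue
        rw [dif_neg (by simpa using not_lt.2 h')]
        congr 1
      have hsucc : glue ρ₁ ρ₂ i.succ = ρ₂ (Fin.succ ⟨(i : ℕ) - w₁.length, hlt⟩) := by
        unfold glue
        rw [dif_neg (by simp; omega)]
        congr 1
        ext
        simp
        omega
      rw [hget, hcast, hsucc]
      exact hr2 ⟨(i : ℕ) - w₁.length, hlt⟩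

theorem glue_right_apply {w₁ w₂ : List A} (ρ₁ : Fin (w₁.length + 1) → Q)
    (ρ₂ : Fin (w₂.length + 1) → Q) (t : Fin (w₂.length + 1)) :
    glue ρ₁ ρ₂ ⟨w₁.length + (t : ℕ), by
      have := t.isLt; have := (List.length_append : (w₁ ++ w₂).length = w₁.length + w₂.length); omega⟩ = ρ₂ t := by
  unfold glue
  rw [dif_neg (by simp)]
  congr 1
  ext
  simp

theorem glue_left_apply {w₁ w₂ : List A} (ρ₁ : Fin (w₁.length + 1) → Q)
    (ρ₂ : Fin (w₂.length + 1) → Q) (t : ℕ) (ht : t < w₁.length) :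
    glue ρ₁ ρ₂ ⟨t, by have := (List.length_append : (w₁ ++ w₂).length = w₁.length + w₂.length); omega⟩ = ρ₁ ⟨t, by omega⟩ := by
  unfold glue
  rw [dif_pos (by simpa using ht)]

end NFA'

/-- If there are a run `π₁` from `q` to `q` labeled `s`, a run `π₂` from `q` to `q'`
labeled `s` with `π₁ ≠ π₂`, and a run `π₃` from `q'` to `q'` labeled `s`, then for every
`k ≥ 1` the number of distinct runs from `q` to `q'` labeled by `s^k` is at least `k`. -/
theorem two_state_loops_linear_runs {Q A : Type*} (M : NFA' Q A) (q q' : Q) (s : List A)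
    (h : ∃ π₁ π₂ π₃, π₁ ∈ M.Runs q q s ∧ π₂ ∈ M.Runs q q' s ∧ π₁ ≠ π₂ ∧
      π₃ ∈ M.Runs q' q' s) :
    ∀ k : ℕ, 1 ≤ k → (k : ℕ∞) ≤ (M.Runs q q' (wordPow s k)).encard := by
  obtain ⟨π₁, π₂, π₃, h₁, h₂, hne, h₃⟩ := h
  have hrep : ∀ k, ∃ σ, σ ∈ M.Runs q' q' (wordPow s k) := by
    intro k
    induction k with
    | zero => exact ⟨fun _ => q', rfl, rfl, fun i => i.elim0⟩
    | succ k ih =>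
      obtain ⟨σ, hσ⟩ := ih
      exact ⟨NFA'.glue π₃ σ, NFA'.glue_mem h₃ hσ⟩
  have hdist : ∀ k (ρ σ : Fin ((wordPow s k).length + 1) → Q),
      ρ ∈ M.Runs q q' (wordPow s k) → σ ∈ M.Runs q' q' (wordPow s k) →
      NFA'.glue π₁ ρ ≠ NFA'.glue π₂ σ := by
    intro k ρ σ hρ hσ heq
    by_cases hq : q = q'
    · obtain ⟨i, hi⟩ := Function.ne_iff.1 hne
      have hilt : (i : ℕ) < s.length := by
        rcases lt_or_eq_of_le (Nat.lt_succ_iff.mp i.isLt) with hlt | hlast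
        · exact hlt
        · exfalso
          apply hi
          have heqi : i = Fin.last s.length := by ext; simpa using hlast
          rw [heqi, h₁.2.1, h₂.2.1, hq]
      have hpt := congrFun heq ⟨(i : ℕ), by
        have := (List.length_append : (s ++ wordPow s k).length = s.length + (wordPow s k).length); omega⟩
      rw [NFA'.glue_left_apply _ _ _ hilt, NFA'.glue_left_apply _ _ _ hilt] at hpt
      exact hi hpt
    · apply hq
      have hpt := congrFun heq ⟨s.length + ((0 : Fin ((wordPow s k).length + 1)) : ℕ), by
        have := (List.length_append : (s ++ wordPow s k).length = s.length + (wordPow s k).length)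
        have := (0 : Fin ((wordPow s k).length + 1)).isLt
        omega⟩
      have e1 := NFA'.glue_right_apply π₁ ρ (0 : Fin ((wordPow s k).length + 1))
      have e2 := NFA'.glue_right_apply π₂ σ (0 : Fin ((wordPow s k).length + 1))
      have : ρ 0 = σ 0 := (e1.symm.trans hpt).trans e2
      rw [hρ.1, hσ.1] at this
      exact this
  have main : ∀ k : ℕ, ((k + 1 : ℕ) : ℕ∞) ≤ (M.Runs q q' (wordPow s (k + 1))).encard := by
    intro k
    induction k with
    | zero =>
      have hmem : NFA'.glue π₂ (fun _ => q') ∈ M.Runs q q' (wordPow s 1) :=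
        NFA'.glue_mem h₂ ⟨rfl, rfl, fun i => i.elim0⟩
      rw [Nat.zero_add, Nat.cast_one]
      exact Set.one_le_encard_iff_nonempty.2 ⟨_, hmem⟩
    | succ k ih =>
      obtain ⟨σ, hσ⟩ := hrep (k + 1)
      set S := M.Runs q q' (wordPow s (k + 1)) with hS
      have hinj : Function.Injective
          (fun ρ : Fin ((wordPow s (k + 1)).length + 1) → Q => NFA'.glue π₁ ρ) := by
        intro ρ ρ' hgl
        funext t
        exact ((NFA'.glue_right_apply π₁ ρ t).symm.trans (congrFun hgl _)).trans
          (NFA'.glue_right_apply π₁ ρ' t)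
      have hsub : insert (NFA'.glue π₂ σ) ((fun ρ => NFA'.glue π₁ ρ) '' S) ⊆
          M.Runs q q' (wordPow s (k + 2)) := by
        rintro x (rfl | ⟨ρ, hρ, rfl⟩)
        · exact NFA'.glue_mem h₂ hσ
        · exact NFA'.glue_mem h₁ hρ
      have hnot : NFA'.glue π₂ σ ∉ (fun ρ => NFA'.glue π₁ ρ) '' S := by
        rintro ⟨ρ, hρ, hglρ⟩
        exact hdist (k + 1) ρ σ hρ hσ hglρ
      calc ((k + 1 + 1 : ℕ) : ℕ∞) = ((k + 1 : ℕ) : ℕ∞) + 1 := by push_cast; ring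
        _ ≤ S.encard + 1 := add_le_add_left ih 1
        _ = ((fun ρ => NFA'.glue π₁ ρ) '' S).encard + 1 := by
            rw [hinj.encard_image]
        _ = (insert (NFA'.glue π₂ σ) ((fun ρ => NFA'.glue π₁ ρ) '' S)).encard :=
            (Set.encard_insert_of_notMem hnot).symm
        _ ≤ _ := Set.encard_mono hsub
  intro k hk
  obtain ⟨k, rfl⟩ := Nat.exists_eq_add_of_le hk
  rw [Nat.add_comm 1 k]
  exact main k
end

section
/- Let A = (Q, Σ, Δ, q0, F) be an NFA. Suppose there exist states q, q' ∈ Q and q_r ∈ Q \ F, and strings s0, s, s1 ∈ Σ* such that: (i) there is a run of A from q0 to q labeled by s0, (ii) there exist a run π1 from q to q labeled by s, a run π2 from q to q' labeled by s with π1 ≠ π2, and a run π3 from q' to q' labeled by s, and (iii) there is a run of A from q' to q_r labeled by s1. Then for every natural number k ≥ 1, the number of distinct runs of A from q0 to q_r labeled by the concatenation s0·s^k·s1 is at least k. -/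
theorem wordPow_length {A : Type*} (s : List A) (k : ℕ) :
    (wordPow s k).length = k * s.length := by
  induction k with
  | zero => simp [wordPow]
  | succ k ih => simp [wordPow, ih]; ring

theorem wordPow_getElem {A : Type*} (s : List A) (k m : ℕ) (h : m < k * s.length) :
    (wordPow s k)[m]'(by rw [wordPow_length]; exact h) =
      s[m % s.length]'(Nat.mod_lt _ (Nat.pos_of_ne_zero (fun e => by rw [e, Nat.mul_zero] at h; omega))) := by
  induction k generalizing m with
  | zero => simp at h
  | succ k ih =>
    show (s ++ wordPow s k)[m]'(by rw [List.length_append, wordPow_length]; rw [Nat.succ_mul] at h; omega) = _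
    by_cases hm : m < s.length
    · rw [List.getElem_append_left hm]
      congr 1
      exact (Nat.mod_eq_of_lt hm).symm
    · push_neg at hm
      obtain ⟨m', rfl⟩ := Nat.exists_eq_add_of_le hm
      rw [List.getElem_append_right (by omega)]
      have h' : m' < k * s.length := by rw [Nat.succ_mul] at h; omega
      have := ih m' h'
      simp only [show s.length + m' - s.length = m' from by omega]
      rw [this]
      congr 1
      rw [Nat.add_mod_left]

/-- If `q` is reachable from `q0` via `s0`, there are a loop `π₁` at `q`, a run `π₂` from
`q` to `q'` with `π₁ ≠ π₂`, and a loop `π₃` at `q'`, all labeled by `s`, and a run from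
`q'` to a non-accepting state `q_r` labeled `s1`, then for every `k ≥ 1` the number of
distinct runs from `q0` to `q_r` labeled `s0 · s^k · s1` is at least `k`. -/
theorem vulnerable_superlinear_runs {Q A : Type*} (M : NFA' Q A) (q q' qr : Q)
    (hqr : qr ∉ M.F) (s₀ s s₁ : List A)
    (hpre : (M.Runs M.q0 q s₀).Nonempty)
    (hcore : ∃ π₁ π₂ π₃, π₁ ∈ M.Runs q q s ∧ π₂ ∈ M.Runs q q' s ∧ π₁ ≠ π₂ ∧
      π₃ ∈ M.Runs q' q' s)
    (hsuf : (M.Runs q' qr s₁).Nonempty) :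
    ∀ k : ℕ, 1 ≤ k →
      (k : ℕ∞) ≤ (M.Runs M.q0 qr (s₀ ++ wordPow s k ++ s₁)).encard := by
  intro k hk
  classical
  obtain ⟨ρ0, hρ0s, hρ0e, hρ0r⟩ := hpre
  obtain ⟨π1, π2, π3, ⟨h1s, h1e, h1r⟩, ⟨h2s, h2e, h2r⟩, hne, ⟨h3s, h3e, h3r⟩⟩ := hcore
  obtain ⟨σ, hσs, hσe, hσr⟩ := hsuf
  have hLs : 0 < s.length := by
    rcases Nat.eq_zero_or_pos s.length with h0 | h
    · exfalso
      apply hne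
      funext x
      have hx : x = (0 : Fin (s.length + 1)) := by apply Fin.ext; omega
      rw [hx, h1s, h2s]
    · exact h
  have hkLs : 1 ≤ k * s.length := Nat.mul_pos (by omega) hLs
  set w := s₀ ++ wordPow s k ++ s₁ with hwdef
  have hwlen : w.length = s₀.length + k * s.length + s₁.length := by
    simp [hwdef, wordPow_length]; omega
  -- ℕ-indexed versions of the runs (clipped)
  set R0 : ℕ → Q := fun n => ρ0 ⟨min n s₀.length, by omega⟩ with hR0
  set P1 : ℕ → Q := fun r => π1 ⟨min r s.length, by omega⟩ with hP1
  set P2 : ℕ → Q := fun r => π2 ⟨min r s.length, by omega⟩ with hP2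
  set P3 : ℕ → Q := fun r => π3 ⟨min r s.length, by omega⟩ with hP3
  set S1 : ℕ → Q := fun t => σ ⟨min t s₁.length, by omega⟩ with hS1
  -- conversion helpers
  have eR : ∀ (n : ℕ) (x : Fin (s₀.length + 1)), min n s₀.length = x.val → R0 n = ρ0 x :=
    fun n x hx => congrArg ρ0 (Fin.ext hx)
  have eP1 : ∀ (n : ℕ) (x : Fin (s.length + 1)), min n s.length = x.val → P1 n = π1 x :=
    fun n x hx => congrArg π1 (Fin.ext hx)
  have eP2 : ∀ (n : ℕ) (x : Fin (s.length + 1)), min n s.length = x.val → P2 n = π2 x :=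
    fun n x hx => congrArg π2 (Fin.ext hx)
  have eP3 : ∀ (n : ℕ) (x : Fin (s.length + 1)), min n s.length = x.val → P3 n = π3 x :=
    fun n x hx => congrArg π3 (Fin.ext hx)
  have eS : ∀ (n : ℕ) (x : Fin (s₁.length + 1)), min n s₁.length = x.val → S1 n = σ x :=
    fun n x hx => congrArg σ (Fin.ext hx)
  -- endpoint values
  have hR0_0 : R0 0 = M.q0 := (eR 0 0 (by simp)).trans hρ0s
  have hR0_L : R0 s₀.length = q := (eR _ (Fin.last _) (by simp)).trans hρ0e
  have hP1_0 : P1 0 = q := (eP1 0 0 (by simp)).trans h1s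
  have hP1_L : P1 s.length = q := (eP1 _ (Fin.last _) (by simp)).trans h1e
  have hP2_0 : P2 0 = q := (eP2 0 0 (by simp)).trans h2s
  have hP2_L : P2 s.length = q' := (eP2 _ (Fin.last _) (by simp)).trans h2e
  have hP3_0 : P3 0 = q' := (eP3 0 0 (by simp)).trans h3s
  have hP3_L : P3 s.length = q' := (eP3 _ (Fin.last _) (by simp)).trans h3e
  have hS_0 : S1 0 = q' := (eS 0 0 (by simp)).trans hσs
  have hS_L : S1 s₁.length = qr := (eS _ (Fin.last _) (by simp)).trans hσe
  -- step lemmas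
  have hstepR : ∀ n (h : n < s₀.length), R0 (n + 1) ∈ M.δ (R0 n) (s₀[n]'h) := by
    intro n h
    rw [eR (n + 1) (Fin.succ ⟨n, h⟩) (by simp; omega),
        eR n (Fin.castSucc ⟨n, h⟩) (by simp; omega)]
    simpa [List.get_eq_getElem] using hρ0r ⟨n, h⟩
  have hstep1 : ∀ n (h : n < s.length), P1 (n + 1) ∈ M.δ (P1 n) (s[n]'h) := by
    intro n h
    rw [eP1 (n + 1) (Fin.succ ⟨n, h⟩) (by simp; omega),
        eP1 n (Fin.castSucc ⟨n, h⟩) (by simp; omega)]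
    simpa [List.get_eq_getElem] using h1r ⟨n, h⟩
  have hstep2 : ∀ n (h : n < s.length), P2 (n + 1) ∈ M.δ (P2 n) (s[n]'h) := by
    intro n h
    rw [eP2 (n + 1) (Fin.succ ⟨n, h⟩) (by simp; omega),
        eP2 n (Fin.castSucc ⟨n, h⟩) (by simp; omega)]
    simpa [List.get_eq_getElem] using h2r ⟨n, h⟩
  have hstep3 : ∀ n (h : n < s.length), P3 (n + 1) ∈ M.δ (P3 n) (s[n]'h) := by
    intro n h
    rw [eP3 (n + 1) (Fin.succ ⟨n, h⟩) (by simp; omega),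
        eP3 n (Fin.castSucc ⟨n, h⟩) (by simp; omega)]
    simpa [List.get_eq_getElem] using h3r ⟨n, h⟩
  have hstepS : ∀ n (h : n < s₁.length), S1 (n + 1) ∈ M.δ (S1 n) (s₁[n]'h) := by
    intro n h
    rw [eS (n + 1) (Fin.succ ⟨n, h⟩) (by simp; omega),
        eS n (Fin.castSucc ⟨n, h⟩) (by simp; omega)]
    simpa [List.get_eq_getElem] using hσr ⟨n, h⟩
  -- the block value function
  set BV : ℕ → ℕ → ℕ → Q := fun i j r =>
    if j < i then P1 r else if j = i then P2 r else P3 r with hBVdef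
  have hBV_zero : ∀ i j, BV i j 0 = if j ≤ i then q else q' := by
    intro i j
    simp only [hBVdef]
    split_ifs with h1 h2 h3 h4 <;>
      first
        | exact hP1_0 | exact hP2_0 | exact hP3_0 | omega
  have hBV_last : ∀ i j, BV i j s.length = if j < i then q else q' := by
    intro i j
    simp only [hBVdef]
    split_ifs with h1 h2 h3 <;>
      first
        | exact hP1_L | exact hP2_L | exact hP3_L | omega
  -- the k runs
  set g : ℕ → ℕ → Q := fun i n =>
    if n ≤ s₀.length then R0 n
    else if n < s₀.length + k * s.length then
      BV i ((n - s₀.length) / s.length) ((n - s₀.length) % s.length)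
    else S1 (n - (s₀.length + k * s.length)) with hgdef
  have hg_pre : ∀ i n, n ≤ s₀.length → g i n = R0 n := by
    intro i n h
    simp only [hgdef]
    rw [if_pos h]
  have hg_suf : ∀ i n, s₀.length + k * s.length ≤ n →
      g i n = S1 (n - (s₀.length + k * s.length)) := by
    intro i n h
    simp only [hgdef]
    rw [if_neg (by omega), if_neg (by omega)]
  have hg_blk : ∀ i n, s₀.length ≤ n → n < s₀.length + k * s.length →
      g i n = BV i ((n - s₀.length) / s.length) ((n - s₀.length) % s.length) := by
    intro i n h1 h2
    rcases Nat.eq_or_lt_of_le h1 with rfl | hlt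
    · rw [hg_pre i _ le_rfl, hR0_L, Nat.sub_self, Nat.zero_div, Nat.zero_mod, hBV_zero,
        if_pos (Nat.zero_le i)]
    · simp only [hgdef]
      rw [if_neg (by omega), if_pos h2]
  -- division helper
  have hdm : ∀ a b : ℕ, b < s.length →
      (a * s.length + b) / s.length = a ∧ (a * s.length + b) % s.length = b := by
    intro a b hb
    constructor
    · rw [Nat.mul_comm, Nat.mul_add_div hLs, Nat.div_eq_of_lt hb, Nat.add_zero]
    · rw [Nat.mul_comm, Nat.mul_add_mod, Nat.mod_eq_of_lt hb]
  -- the family of runs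
  set F : Fin k → (Fin (w.length + 1) → Q) := fun i x => g i.val x.val with hF
  -- w getElem lemmas
  have hwget1 : ∀ n (h : n < s₀.length),
      w[n]'(by rw [hwlen]; omega) = s₀[n]'h := by
    intro n h
    show ((s₀ ++ wordPow s k) ++ s₁)[n]'_ = _
    rw [List.getElem_append_left (by rw [List.length_append, wordPow_length]; omega),
      List.getElem_append_left h]
  have hwget2 : ∀ n (h1 : s₀.length ≤ n) (h2 : n < s₀.length + k * s.length),
      w[n]'(by rw [hwlen]; omega) = s[(n - s₀.length) % s.length]'(Nat.mod_lt _ hLs) := by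
    intro n h1 h2
    show ((s₀ ++ wordPow s k) ++ s₁)[n]'_ = _
    rw [List.getElem_append_left (by rw [List.length_append, wordPow_length]; omega),
      List.getElem_append_right h1]
    exact wordPow_getElem s k (n - s₀.length) (by omega)
  have hwget3 : ∀ n (h1 : s₀.length + k * s.length ≤ n)
      (h2 : n < s₀.length + k * s.length + s₁.length),
      w[n]'(by rw [hwlen]; omega) = s₁[n - (s₀.length + k * s.length)]'(by omega) := by
    intro n h1 h2
    show ((s₀ ++ wordPow s k) ++ s₁)[n]'_ = _
    rw [List.getElem_append_right (by rw [List.length_append, wordPow_length]; omega)]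
    congr 1
    rw [List.length_append, wordPow_length]
  -- the runs are runs
  have hmem : ∀ i : Fin k, F i ∈ M.Runs M.q0 qr w := by
    intro i
    refine ⟨?_, ?_, ?_⟩
    · show g i.val ((0 : Fin (w.length + 1)).val) = M.q0
      rw [Fin.val_zero, hg_pre i.val 0 (by omega), hR0_0]
    · show g i.val ((Fin.last w.length).val) = qr
      rw [Fin.val_last, hwlen, hg_suf i.val _ (by omega)]
      rw [show s₀.length + k * s.length + s₁.length - (s₀.length + k * s.length) = s₁.length
        from by omega, hS_L]
    · intro x
      simp only [List.get_eq_getElem]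
      show g i.val (x.val + 1) ∈ M.δ (g i.val x.val) (w[x.val]'x.isLt)
      have hn : x.val < s₀.length + k * s.length + s₁.length := by rw [← hwlen]; exact x.isLt
      rcases Nat.lt_or_ge x.val s₀.length with hA | hA
      · -- inside s₀
        rw [hwget1 x.val hA, hg_pre i.val _ (by omega), hg_pre i.val _ (by omega)]
        exact hstepR x.val hA
      · rcases Nat.lt_or_ge x.val (s₀.length + k * s.length) with hB | hC
        · -- inside the s-blocks
          rw [hwget2 x.val hA hB, hg_blk i.val x.val hA hB]
          obtain ⟨j, r, hjr, hr⟩ : ∃ j r, x.val - s₀.length = j * s.length + r ∧ r < s.length :=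
            ⟨(x.val - s₀.length) / s.length, (x.val - s₀.length) % s.length,
              by rw [Nat.mul_comm]; exact (Nat.div_add_mod _ _).symm, Nat.mod_lt _ hLs⟩
          have ediv : (x.val - s₀.length) / s.length = j := by rw [hjr]; exact (hdm j r hr).1
          have emod : (x.val - s₀.length) % s.length = r := by rw [hjr]; exact (hdm j r hr).2
          simp only [ediv, emod]
          have hjk : j < k := by
            by_contra hjk
            push_neg at hjk
            have : k * s.length ≤ j * s.length := Nat.mul_le_mul_right _ hjk
            omega
          rcases Nat.lt_or_ge (r + 1) s.length with hr1 | hr1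
          · -- stay within block j
            have hlt' : x.val + 1 < s₀.length + k * s.length := by
              have : j * s.length + (r + 1) < k * s.length := by
                calc j * s.length + (r + 1) < j * s.length + s.length := by omega
                _ = (j + 1) * s.length := by ring
                _ ≤ k * s.length := Nat.mul_le_mul_right _ (by omega)
              omega
            rw [hg_blk i.val (x.val + 1) (by omega) hlt']
            have hx1 : x.val + 1 - s₀.length = j * s.length + (r + 1) := by omega
            have hjd' := hdm j (r + 1) hr1
            rw [hx1, hjd'.1, hjd'.2]
            simp only [hBVdef]
            split_ifs
            · exact hstep1 r hr
            · exact hstep2 r hr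
            · exact hstep3 r hr
          · -- cross a block boundary: r + 1 = s.length
            have hrL : r + 1 = s.length := by omega
            have hx1 : x.val + 1 - s₀.length = (j + 1) * s.length := by
              rw [Nat.succ_mul]; omega
            have hδ : ∀ v : Q, v = BV i.val j (r + 1) → v ∈ M.δ (BV i.val j r) (s[r]'hr) := by
              intro v hv
              rw [hv]
              simp only [hBVdef]
              split_ifs
              · exact hstep1 r hr
              · exact hstep2 r hr
              · exact hstep3 r hr
            rcases Nat.lt_or_ge (x.val + 1) (s₀.length + k * s.length) with hcr | hcr
            · -- next index still in the blocks: starts block j+1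
              rw [hg_blk i.val (x.val + 1) (by omega) hcr, hx1]
              have hjd' := hdm (j + 1) 0 hLs
              rw [show (j+1) * s.length = (j+1) * s.length + 0 from by omega] at *
              rw [hjd'.1, hjd'.2]
              apply hδ
              rw [hBV_zero, hrL, hBV_last]
              split_ifs <;> first | rfl | omega
            · -- next index is exactly the start of s₁ part
              rw [hg_suf i.val (x.val + 1) hcr]
              have hxk : x.val + 1 = s₀.length + k * s.length := by omega
              rw [hxk, show s₀.length + k * s.length - (s₀.length + k * s.length) = 0
                from by omega, hS_0]
              have hjk1 : j + 1 = k := by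
                by_contra hc
                have hj1k : j + 1 < k := by omega
                have : (j + 1) * s.length + s.length ≤ k * s.length := by
                  calc (j+1) * s.length + s.length = (j+2) * s.length := by ring
                  _ ≤ k * s.length := Nat.mul_le_mul_right _ (by omega)
                omega
              apply hδ
              rw [hrL, hBV_last]
              have : ¬ j < i.val := by
                have := i.isLt
                omega
              rw [if_neg this]
        · -- inside s₁
          have ht : x.val - (s₀.length + k * s.length) < s₁.length := by omega
          rw [hwget3 x.val hC hn, hg_suf i.val _ (by omega), hg_suf i.val _ (by omega)]
          rw [show x.val + 1 - (s₀.length + k * s.length) =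
            (x.val - (s₀.length + k * s.length)) + 1 from by omega]
          exact hstepS _ ht
  -- distinctness
  obtain ⟨t, ht⟩ : ∃ t : Fin (s.length + 1), π1 t ≠ π2 t := Function.ne_iff.mp hne
  have hkey : ∀ i1 i2 : Fin k, i1 < i2 → F i1 ≠ F i2 := by
    intro i1 i2 h12 hFeq
    rcases Nat.lt_or_ge t.val s.length with htl | htl
    · -- witness inside the loop word
      set n := s₀.length + i1.val * s.length + t.val with hn
      have hnlt : n < s₀.length + k * s.length := by
        have : i1.val * s.length + s.length ≤ k * s.length := by
          calc i1.val * s.length + s.length = (i1.val + 1) * s.length := by ring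
          _ ≤ k * s.length := Nat.mul_le_mul_right _ (by omega)
        omega
      have hnw : n < w.length + 1 := by rw [hwlen]; omega
      have := congrFun hFeq ⟨n, hnw⟩
      simp only [hF] at this
      have hsub : n - s₀.length = i1.val * s.length + t.val := by omega
      have ediv : (n - s₀.length) / s.length = i1.val := by rw [hsub]; exact (hdm _ _ htl).1
      have emod : (n - s₀.length) % s.length = t.val := by rw [hsub]; exact (hdm _ _ htl).2
      have h12v : i1.val < i2.val := Fin.lt_iff_val_lt_val.mp h12
      have e1 : g i1.val n = π2 t := by
        rw [hg_blk i1.val n (by omega) hnlt, ediv, emod]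
        simp only [hBVdef]
        have hc1 : ¬ (i1.val < i1.val) := lt_irrefl _
        simp only [hc1, if_false, eq_self_iff_true, if_true]
        exact eP2 t.val t (by omega)
      have e2 : g i2.val n = π1 t := by
        rw [hg_blk i2.val n (by omega) hnlt, ediv, emod]
        simp only [hBVdef]
        rw [if_pos h12v]
        exact eP1 t.val t (by omega)
      exact ht ((e2.symm.trans this.symm).trans e1)
    · -- witness is the endpoint: q ≠ q'
      have htL : t.val = s.length := by have := t.isLt; omega
      have hqq' : q ≠ q' := by
        intro hq
        apply ht
        have e1 : π1 t = q := by
          rw [show t = Fin.last s.length from Fin.ext (by simp [htL])]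
          exact h1e
        have e2 : π2 t = q' := by
          rw [show t = Fin.last s.length from Fin.ext (by simp [htL])]
          exact h2e
        rw [e1, e2, hq]
      set n := s₀.length + (i1.val + 1) * s.length with hn
      have hi1k : i1.val + 1 < k := by
        have h2k := i2.isLt
        have := Fin.lt_iff_val_lt_val.mp h12
        omega
      have hnlt : n < s₀.length + k * s.length := by
        have : (i1.val + 1) * s.length + s.length ≤ k * s.length := by
          calc (i1.val + 1) * s.length + s.length = (i1.val + 2) * s.length := by ring
          _ ≤ k * s.length := Nat.mul_le_mul_right _ (by omega)
        omega
      have hnw : n < w.length + 1 := by rw [hwlen]; omega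
      have := congrFun hFeq ⟨n, hnw⟩
      simp only [hF] at this
      have hsub : n - s₀.length = (i1.val + 1) * s.length + 0 := by omega
      have ediv : (n - s₀.length) / s.length = i1.val + 1 := by
        rw [hsub]; exact (hdm _ _ hLs).1
      have emod : (n - s₀.length) % s.length = 0 := by
        rw [hsub]; exact (hdm _ _ hLs).2
      have h12v : i1.val < i2.val := Fin.lt_iff_val_lt_val.mp h12
      have e1 : g i1.val n = q' := by
        rw [hg_blk i1.val n (by omega) hnlt, ediv, emod, hBV_zero, if_neg (by omega)]
      have e2 : g i2.val n = q := by
        rw [hg_blk i2.val n (by omega) hnlt, ediv, emod, hBV_zero, if_pos (by omega)]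
      exact hqq' ((e1.symm.trans this).trans e2).symm
  have hinj : Function.Injective F := by
    intro a b hab
    by_contra hab'
    rcases lt_or_gt_of_ne hab' with h | h
    · exact hkey a b h hab
    · exact hkey b a h hab.symm
  -- conclude
  have hsub : Set.range F ⊆ M.Runs M.q0 qr w := by
    rintro _ ⟨i, rfl⟩
    exact hmem i
  have hcard : (Set.range F).encard = (k : ℕ∞) := by
    rw [← Set.image_univ, Set.InjOn.encard_image hinj.injOn, Set.encard_univ,
      ENat.card_eq_coe_fintype_card]
    simp
  calc (k : ℕ∞) = (Set.range F).encard := hcard.symm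
  _ ≤ (M.Runs M.q0 qr w).encard := Set.encard_le_encard hsub
end

section
/- Let A = (Q, Σ, Δ, q0, F) be an NFA, q ∈ Q a state, and s ∈ Σ* a string such that there exist two distinct runs of A from q to q both labeled by s. Then there exist a state p ∈ Q and strings s', s'' with s = s'·s'' such that: (i) there is a run of A from q to p labeled by s', (ii) there is a run of A from p to q labeled by s'', and (iii) there exist two distinct runs of A from p to p both labeled by s''·s' whose state sequences differ already at position 1, i.e., the states they reach after reading the first symbol of s''·s' are different. -/
/-- If there are two distinct runs of `M` from `q` to `q` both labeled by `s`, then there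
are a state `p` and a splitting `s = s' · s''` such that `q` reaches `p` via `s'`, `p`
reaches `q` via `s''`, and there are two distinct runs from `p` to `p` labeled by
`s'' · s'` whose state sequences already differ at position `1`, i.e. the states reached
after reading the first symbol are different. -/
theorem two_distinct_loops_rotate_to_distinct_first_step {Q A : Type*} (M : NFA' Q A)
    (q : Q) (s : List A)
    (h : ∃ ρ₁ ρ₂, ρ₁ ∈ M.Runs q q s ∧ ρ₂ ∈ M.Runs q q s ∧ ρ₁ ≠ ρ₂) :
    ∃ (p : Q) (s' s'' : List A), s = s' ++ s'' ∧
      (M.Runs q p s').Nonempty ∧ (M.Runs p q s'').Nonempty ∧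
      ∃ ρ₁ ρ₂, ρ₁ ∈ M.Runs p p (s'' ++ s') ∧ ρ₂ ∈ M.Runs p p (s'' ++ s') ∧
        ρ₁ ≠ ρ₂ ∧ ρ₁ 1 ≠ ρ₂ 1 := by
  classical
  obtain ⟨ρ₁, ρ₂, ⟨h10, h1l, hr1⟩, ⟨h20, h2l, hr2⟩, hne⟩ := h
  -- least differing index
  have hPex : ∃ j : ℕ, ∃ hj : j < s.length + 1, ρ₁ ⟨j, hj⟩ ≠ ρ₂ ⟨j, hj⟩ := by
    by_contra hc
    push_neg at hc
    exact hne (funext fun k => hc k.val k.isLt)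
  obtain ⟨j, hjlt, hjne, hjmin⟩ :
      ∃ j : ℕ, ∃ hj : j < s.length + 1, ρ₁ ⟨j, hj⟩ ≠ ρ₂ ⟨j, hj⟩ ∧
        ∀ m, m < j → ∀ hm : m < s.length + 1, ρ₁ ⟨m, hm⟩ = ρ₂ ⟨m, hm⟩ := by
    refine ⟨Nat.find hPex, (Nat.find_spec hPex).1, (Nat.find_spec hPex).2, ?_⟩
    intro m hm hmlt
    have := Nat.find_min hPex hm
    push_neg at this
    exact this hmlt
  have hj1 : 1 ≤ j := by
    by_contra h0
    apply hjne
    have e1 : (⟨j, hjlt⟩ : Fin (s.length + 1)) = 0 := by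
      simp only [Fin.ext_iff, Fin.val_zero]; omega
    rw [e1, h10, h20]
  have hjn : j < s.length := by
    rcases lt_or_eq_of_le (Nat.lt_succ_iff.mp hjlt) with h' | h'
    · exact h'
    · exfalso
      apply hjne
      have e1 : (⟨j, hjlt⟩ : Fin (s.length + 1)) = Fin.last s.length := by
        simp only [Fin.ext_iff, Fin.val_last]; omega
      rw [e1, h1l, h2l]
  obtain ⟨i, rfl⟩ : ∃ i, j = i + 1 := ⟨j - 1, by omega⟩
  have hin : i + 1 < s.length := hjn
  have hilt : i < s.length + 1 := by omega
  have hρ₂i : ρ₂ ⟨i, hilt⟩ = ρ₁ ⟨i, hilt⟩ := (hjmin i (by omega) hilt).symm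
  have hlt : (s.take i).length = i := by
    simp only [List.length_take]; omega
  have hld : (s.drop i).length = s.length - i := List.length_drop
  have hlen : (s.drop i ++ s.take i).length = s.length := by
    simp only [List.length_append, hld, hlt]; omega
  refine ⟨ρ₁ ⟨i, hilt⟩, s.take i, s.drop i, (List.take_append_drop i s).symm, ?_, ?_, ?_⟩
  · -- run from q to p on s.take i
    refine ⟨fun k => ρ₁ ⟨k.val, by have := k.isLt; omega⟩, ?_, ?_, ?_⟩
    · simpa using h10
    · simp only [Fin.last]
      congr 1
      simp only [Fin.ext_iff]
      omega
    · intro k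
      have hk : k.val < i := by have := k.isLt; omega
      have hkn : k.val < s.length := by omega
      have hstep := hr1 ⟨k.val, hkn⟩
      simp only [Fin.succ, Fin.castSucc, Fin.castAdd, Fin.castLE, List.get_eq_getElem]
        at hstep ⊢
      rwa [List.getElem_take]
  · -- run from p to q on s.drop i
    refine ⟨fun k => ρ₁ ⟨i + k.val, by have := k.isLt; omega⟩, ?_, ?_, ?_⟩
    · simp
    · simp only [Fin.last]
      have e : (⟨i + (s.drop i).length, by omega⟩ : Fin (s.length + 1))
          = Fin.last s.length := by
        simp only [Fin.ext_iff, Fin.val_last]; omega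
      rw [e, h1l]
    · intro k
      have hk : k.val < s.length - i := by have := k.isLt; omega
      have hkn : i + k.val < s.length := by omega
      have hstep := hr1 ⟨i + k.val, hkn⟩
      simp only [Fin.succ, Fin.castSucc, Fin.castAdd, Fin.castLE, List.get_eq_getElem]
        at hstep ⊢
      rw [List.getElem_drop]
      have e : (⟨i + k.val + 1, by omega⟩ : Fin (s.length + 1))
          = ⟨i + (k.val + 1), by omega⟩ := by
        simp only [Fin.ext_iff]; omega
      rw [e] at hstep
      exact hstep
  · -- two rotated runs differing at position 1
    have key : ∀ ρ : Fin (s.length + 1) → Q, ρ 0 = q → ρ (Fin.last s.length) = q →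
        M.IsRunOn s ρ → ρ ⟨i, hilt⟩ = ρ₁ ⟨i, hilt⟩ →
        (fun m : Fin ((s.drop i ++ s.take i).length + 1) =>
          if _ : m.val < s.length - i then ρ ⟨i + m.val, by omega⟩
          else ρ₁ ⟨m.val - (s.length - i), by have := m.isLt; omega⟩)
          ∈ M.Runs (ρ₁ ⟨i, hilt⟩) (ρ₁ ⟨i, hilt⟩) (s.drop i ++ s.take i) := by
      intro ρ hρ0 hρl hρr hρi
      refine ⟨?_, ?_, ?_⟩
      · show (if _ : (0:ℕ) < s.length - i then _ else _) = _
        rw [dif_pos (by omega)]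
        rw [← hρi]
        congr 1 <;> simp [Fin.ext_iff]
      · show (if _ : ((Fin.last (s.drop i ++ s.take i).length)).val < s.length - i
            then _ else _) = _
        rw [dif_neg (by simp only [Fin.val_last]; omega)]
        congr 1
        simp only [Fin.ext_iff, Fin.val_last]
        omega
      · intro m
        have hm : m.val < s.length := by have := m.isLt; omega
        simp only [Fin.succ, Fin.castSucc, Fin.castAdd, Fin.castLE, List.get_eq_getElem]
        by_cases hc : m.val < s.length - i
        · rw [dif_pos hc]
          have hlet : (s.drop i ++ s.take i)[m.val]'m.isLt
              = s[i + m.val]'(by omega) := by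
            rw [List.getElem_append_left (by omega), List.getElem_drop]
          rw [hlet]
          have hstep := hρr ⟨i + m.val, by omega⟩
          simp only [Fin.succ, Fin.castSucc, Fin.castAdd, Fin.castLE,
            List.get_eq_getElem] at hstep
          by_cases hc1 : m.val + 1 < s.length - i
          · rw [dif_pos hc1]
            have e : (⟨i + (m.val + 1), by omega⟩ : Fin (s.length + 1))
                = ⟨i + m.val + 1, by omega⟩ := by
              simp only [Fin.ext_iff]; omega
            rw [e]
            exact hstep
          · rw [dif_neg hc1]
            have e1 : (⟨m.val + 1 - (s.length - i), by have := m.isLt; omega⟩ :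
                Fin (s.length + 1)) = 0 := by
              simp only [Fin.ext_iff, Fin.val_zero]; omega
            have e2 : (⟨i + m.val + 1, by omega⟩ : Fin (s.length + 1))
                = Fin.last s.length := by
              simp only [Fin.ext_iff, Fin.val_last]; omega
            rw [e1, h10, ← hρl]
            rw [e2] at hstep
            exact hstep
        · rw [dif_neg hc, dif_neg (by omega)]
          have hml : s.length - i ≤ m.val := by omega
          have hlet : (s.drop i ++ s.take i)[m.val]'m.isLt
              = s[m.val - (s.length - i)]'(by omega) := by
            rw [List.getElem_append_right (by omega), List.getElem_take]
            congr 1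
            omega
          rw [hlet]
          have hstep := hr1 ⟨m.val - (s.length - i), by omega⟩
          simp only [Fin.succ, Fin.castSucc, Fin.castAdd, Fin.castLE,
            List.get_eq_getElem] at hstep
          have e : (⟨m.val + 1 - (s.length - i), by have := m.isLt; omega⟩ :
              Fin (s.length + 1)) = ⟨m.val - (s.length - i) + 1, by omega⟩ := by
            simp only [Fin.ext_iff]; omega
          rw [e]
          exact hstep
    have hmem1 := key ρ₁ h10 h1l hr1 rfl
    have hmem2 := key ρ₂ h20 h2l hr2 hρ₂i
    have hb : (1:ℕ) < (s.drop i ++ s.take i).length + 1 := by omega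
    have hcpf : ((⟨1, hb⟩ : Fin ((s.drop i ++ s.take i).length + 1))).val
        < s.length - i := by
      show (1:ℕ) < s.length - i
      omega
    refine ⟨_, _, hmem1, hmem2, ?_, ?_⟩
    · intro he
      apply hjne
      have he1 := congrFun he ⟨1, hb⟩
      simp only at he1
      rw [dif_pos hcpf] at he1
      rw [dif_pos hcpf] at he1
      exact he1
    · intro he
      apply hjne
      have hc1 : ((1 : Fin ((s.drop i ++ s.take i).length + 1))).val
          < s.length - i := by
        rw [Fin.val_one', Nat.mod_eq_of_lt hb]; omega
      rw [dif_pos hc1] at he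
      rw [dif_pos hc1] at he
      convert he using 2 <;>
        · simp only [Fin.ext_iff, Fin.val_one']
          rw [Nat.mod_eq_of_lt (by omega)]
end

section
/- Let A = (Q, Σ, Δ, q0, F) be an NFA with finite state set Q. Suppose there is NO state q ∈ Q such that simultaneously: (i) there is a run of A from q0 to q, (ii) there exist two distinct runs of A from q to q with the same label string, and (iii) there is a run of A from q to some non-accepting state. Then there exist constants c, d ∈ ℕ (depending only on A) such that for every string w ∈ Σ* and every non-accepting state q_r ∈ Q \ F, the number of distinct runs of A from q0 to q_r labeled by w is at most c·(|w|+1)^d. -/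
namespace NFA'

variable {Q A : Type*}

lemma slice_len (w : List A) {a b : ℕ} (hab : a ≤ b) (hb : b ≤ w.length) :
    ((w.drop a).take (b - a)).length = b - a := by
  simp [List.length_take, List.length_drop]; omega

/-- Segment of a run from position `a` to position `b`. -/
def segRun {w : List A} (ρ : Fin (w.length + 1) → Q) (a b : ℕ) (hab : a ≤ b)
    (hb : b ≤ w.length) : Fin (((w.drop a).take (b - a)).length + 1) → Q :=
  fun k => ρ ⟨a + k.val, by
    have hk := k.isLt
    have hl := slice_len w hab hb
    omega⟩

lemma segRun_mem {M : NFA' Q A} {w : List A} {ρ : Fin (w.length + 1) → Q}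
    (hρ : M.IsRunOn w ρ) (a b : ℕ) (hab : a ≤ b) (hb : b ≤ w.length) :
    segRun ρ a b hab hb ∈
      M.Runs (ρ ⟨a, by omega⟩) (ρ ⟨b, by omega⟩) ((w.drop a).take (b - a)) := by
  have hlen := slice_len w hab hb
  refine ⟨?_, ?_, ?_⟩
  · show ρ ⟨a + _, _⟩ = _
    congr 1
    all_goals exact Fin.ext (by simp)
  · show ρ ⟨a + _, _⟩ = _
    congr 1
    all_goals exact Fin.ext (by simp [Fin.last, hlen]; omega)
  · intro i
    have hi : (i : ℕ) < b - a := by have := i.isLt; omega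
    have hlt : a + i.val < w.length := by omega
    have := hρ ⟨a + i.val, hlt⟩
    have hget : ((w.drop a).take (b - a)).get i = w.get ⟨a + i.val, hlt⟩ := by
      simp [List.get_eq_getElem, List.getElem_take, List.getElem_drop]
    rw [hget]
    convert this using 2 <;> simp [segRun, Fin.succ, Fin.castSucc, Nat.add_assoc]


/-- Positions where the run `ρ` visits state `q`. -/
def occ [DecidableEq Q] {n : ℕ} (ρ : Fin (n + 1) → Q) (q : Q) : Finset (Fin (n + 1)) :=
  Finset.univ.filter (fun i => ρ i = q)

/-- Encoding of a run by first and last occurrence of each state. -/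
def enc [DecidableEq Q] {n : ℕ} (ρ : Fin (n + 1) → Q) (q : Q) : Fin (n + 2) × Fin (n + 2) :=
  if h : (occ ρ q).Nonempty then
    (((occ ρ q).min' h).castSucc, ((occ ρ q).max' h).castSucc)
  else (Fin.last (n + 1), Fin.last (n + 1))

lemma enc_injOn [DecidableEq Q] (M : NFA' Q A) (p r : Q) (w : List A)
    (hU : ∀ ρ ∈ M.Runs p r w, ∀ i : Fin (w.length + 1), ∀ (s : List A)
      (τ₁ τ₂ : Fin (s.length + 1) → Q),
      τ₁ ∈ M.Runs (ρ i) (ρ i) s → τ₂ ∈ M.Runs (ρ i) (ρ i) s → τ₁ = τ₂) :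
    Set.InjOn (fun ρ => (enc ρ : Q → Fin (w.length + 2) × Fin (w.length + 2)))
      (M.Runs p r w) := by
  intro ρ hρ σ hσ hE
  funext i
  have hEq : enc ρ (ρ i) = enc σ (ρ i) := congrFun hE (ρ i)
  set q := ρ i with hq
  have hiρ : i ∈ occ ρ q := by simp [occ, hq]
  have h1 : (occ ρ q).Nonempty := ⟨i, hiρ⟩
  rw [enc, dif_pos h1] at hEq
  by_cases h2 : (occ σ q).Nonempty
  · rw [enc, dif_pos h2] at hEq
    rw [Prod.mk.injEq] at hEq
    obtain ⟨e1, e2⟩ := hEq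
    rw [Fin.castSucc_inj] at e1 e2
    set a := (occ ρ q).min' h1 with ha
    set b := (occ ρ q).max' h1 with hb
    have haρ : ρ a = q := by have := (occ ρ q).min'_mem h1; exact (Finset.mem_filter.mp this).2
    have hbρ : ρ b = q := by have := (occ ρ q).max'_mem h1; exact (Finset.mem_filter.mp this).2
    have haσ : σ a = q := by
      have := (occ σ q).min'_mem h2
      rw [← e1] at this; simpa [occ] using this
    have hbσ : σ b = q := by
      have := (occ σ q).max'_mem h2
      rw [← e2] at this; simpa [occ] using this
    have hai : a ≤ i := (occ ρ q).min'_le i hiρ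
    have hib : i ≤ b := (occ ρ q).le_max' i hiρ
    have hab : (a : ℕ) ≤ (b : ℕ) := Fin.le_iff_val_le_val.mp (hai.trans hib)
    have hbw : (b : ℕ) ≤ w.length := by have := b.isLt; omega
    have m1 : segRun ρ (a : ℕ) (b : ℕ) hab hbw ∈ M.Runs (ρ a) (ρ b)
        ((w.drop (a : ℕ)).take ((b : ℕ) - (a : ℕ))) :=
      segRun_mem hρ.2.2 (a : ℕ) (b : ℕ) hab hbw
    have m2 : segRun σ (a : ℕ) (b : ℕ) hab hbw ∈ M.Runs (σ a) (σ b)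
        ((w.drop (a : ℕ)).take ((b : ℕ) - (a : ℕ))) :=
      segRun_mem hσ.2.2 (a : ℕ) (b : ℕ) hab hbw
    rw [haρ, hbρ] at m1
    rw [haσ, hbσ] at m2
    rw [hq] at m1 m2
    have τeq := hU ρ hρ i _ _ _ m1 m2
    have hk : (i : ℕ) - (a : ℕ) < ((w.drop (a : ℕ)).take ((b : ℕ) - (a : ℕ))).length + 1 := by
      rw [slice_len w hab hbw]
      have := i.isLt; have : (a:ℕ) ≤ (i:ℕ) := hai; omega
    have e := congrFun τeq ⟨(i : ℕ) - (a : ℕ), hk⟩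
    simp only [segRun] at e
    have hii : i = (⟨(a : ℕ) + ((i : ℕ) - (a : ℕ)), by have := i.isLt; have : (a:ℕ) ≤ (i:ℕ) := hai; omega⟩ : Fin (w.length + 1)) := by
      apply Fin.ext
      have : (a:ℕ) ≤ (i:ℕ) := hai
      simp
      omega
    rw [hq, hii]
    exact e
  · rw [enc, dif_neg h2] at hEq
    have := congrArg Prod.fst hEq
    simp at this

end NFA'

/-- If a finite-state NFA has no pivot state `q` that is reachable from `q0`, carries two
distinct equal-labeled loops, and can reach a non-accepting state, then the number of
runs from `q0` to any non-accepting state labeled by `w` is polynomially bounded in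
the length of `w`. -/
theorem polynomial_runs_of_not_hyperVulnerable {Q A : Type*} [Finite Q] (M : NFA' Q A)
    (h : ¬ ∃ q : Q,
      (∃ w : List A, (M.Runs M.q0 q w).Nonempty) ∧
      (∃ (s : List A) (ρ₁ ρ₂ : Fin (s.length + 1) → Q),
        ρ₁ ∈ M.Runs q q s ∧ ρ₂ ∈ M.Runs q q s ∧ ρ₁ ≠ ρ₂) ∧
      (∃ qr : Q, qr ∉ M.F ∧ ∃ v : List A, (M.Runs q qr v).Nonempty)) :
    ∃ c d : ℕ, ∀ (w : List A) (qr : Q), qr ∉ M.F →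
      (M.Runs M.q0 qr w).encard ≤ ((c * (w.length + 1) ^ d : ℕ) : ℕ∞) := by
  classical
  refine ⟨4 ^ Nat.card Q, 2 * Nat.card Q, ?_⟩
  intro w qr hqr
  -- every two equal-labeled loops at a state on a run from q0 to qr coincide
  have hU : ∀ ρ ∈ M.Runs M.q0 qr w, ∀ i : Fin (w.length + 1), ∀ (s : List A)
      (τ₁ τ₂ : Fin (s.length + 1) → Q),
      τ₁ ∈ M.Runs (ρ i) (ρ i) s → τ₂ ∈ M.Runs (ρ i) (ρ i) s → τ₁ = τ₂ := by
    rintro ρ ⟨h0, hlast, hrun⟩ i s τ₁ τ₂ ht1 ht2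
    by_contra hne
    refine h ⟨ρ i, ?_, ⟨s, τ₁, τ₂, ht1, ht2, hne⟩, qr, hqr, ?_⟩
    · -- reachability
      have hi : (i : ℕ) ≤ w.length := by have := i.isLt; omega
      have m : NFA'.segRun ρ 0 (i : ℕ) (Nat.zero_le _) hi ∈
          M.Runs (ρ ⟨0, Nat.succ_pos _⟩) (ρ i) ((w.drop 0).take ((i : ℕ) - 0)) :=
        NFA'.segRun_mem hrun 0 (i : ℕ) (Nat.zero_le _) hi
      have h00 : ρ ⟨0, Nat.succ_pos _⟩ = M.q0 := by
        rw [← h0]; exact congrArg ρ (Fin.ext (by simp))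
      rw [h00] at m
      exact ⟨_, _, m⟩
    · -- co-reachability
      have hi : (i : ℕ) ≤ w.length := by have := i.isLt; omega
      have m : NFA'.segRun ρ (i : ℕ) w.length hi le_rfl ∈
          M.Runs (ρ i) (ρ ⟨w.length, by omega⟩) ((w.drop (i : ℕ)).take (w.length - (i : ℕ))) :=
        NFA'.segRun_mem hrun (i : ℕ) w.length hi le_rfl
      have hlast' : ρ ⟨w.length, by omega⟩ = qr := hlast
      rw [hlast'] at m
      exact ⟨_, _, m⟩
  have hinj := NFA'.enc_injOn M M.q0 qr w hU
  have hle : (M.Runs M.q0 qr w).encard ≤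
      (Nat.card (Q → Fin (w.length + 2) × Fin (w.length + 2)) : ℕ∞) := by
    rw [← hinj.encard_image]
    calc ((fun ρ => (NFA'.enc ρ : Q → Fin (w.length + 2) × Fin (w.length + 2))) ''
          M.Runs M.q0 qr w).encard
        ≤ (Set.univ : Set (Q → Fin (w.length + 2) × Fin (w.length + 2))).encard :=
          Set.encard_mono (Set.subset_univ _)
      _ = _ := by rw [Set.encard_univ, ENat.card_eq_coe_natCard]
  refine hle.trans ?_
  rw [Nat.cast_le]
  have hT : Nat.card (Q → Fin (w.length + 2) × Fin (w.length + 2)) =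
      ((w.length + 2) * (w.length + 2)) ^ Nat.card Q := by
    rw [Nat.card_fun]
    congr 1
    simp [Nat.card_eq_fintype_card]
  rw [hT]
  calc ((w.length + 2) * (w.length + 2)) ^ Nat.card Q
      ≤ ((2 * (w.length + 1)) * (2 * (w.length + 1))) ^ Nat.card Q :=
        Nat.pow_le_pow_left (by nlinarith) _
    _ = (4 * (w.length + 1) ^ 2) ^ Nat.card Q := by
        congr 1; ring
    _ = 4 ^ Nat.card Q * ((w.length + 1) ^ 2) ^ Nat.card Q := mul_pow ..
    _ = 4 ^ Nat.card Q * (w.length + 1) ^ (2 * Nat.card Q) := by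
        rw [← pow_mul]
end

section
/- Let A = (Q, Σ, Δ, q0, F) be an NFA with finite state set Q. Suppose there are NO states q, q' ∈ Q and string s ∈ Σ* such that simultaneously: (i) there is a run π1 of A from q to q labeled by s, a run π2 of A from q to q' labeled by s with π1 ≠ π2, and a run π3 of A from q' to q' labeled by s, (ii) there is a run of A from q0 to q, and (iii) there is a run of A from q' to some non-accepting state. Then there exists a constant C ∈ ℕ (depending only on A) such that for every string w ∈ Σ* and every non-accepting state q_r ∈ Q \ F, the number of distinct runs of A from q0 to q_r labeled by w is at most C. -/
namespace NFAProof
open List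

variable {Q A : Type*}

/-- ℕ-indexed run predicate. -/
def NRun (M : NFA' Q A) (w : List A) (f : ℕ → Q) : Prop :=
  ∀ i, (h : i < w.length) → f (i + 1) ∈ M.δ (f i) (w[i]'h)

def sliceW (w : List A) (a b : ℕ) : List A := (w.drop a).take (b - a)

lemma length_sliceW (w : List A) {a b : ℕ} (hab : a ≤ b) (hb : b ≤ w.length) :
    (sliceW w a b).length = b - a := by
  simp [sliceW]; omega

lemma getElem_sliceW (w : List A) {a b i : ℕ} (hab : a ≤ b) (hb : b ≤ w.length)
    (hi : i < (sliceW w a b).length) :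
    (sliceW w a b)[i] = w[a + i]'(by rw [length_sliceW w hab hb] at hi; omega) := by
  simp [sliceW, List.getElem_take, List.getElem_drop]

lemma NRun.slice {M : NFA' Q A} {w : List A} {f : ℕ → Q} (hf : NRun M w f) {a b : ℕ}
    (hab : a ≤ b) (hb : b ≤ w.length) :
    NRun M (sliceW w a b) (fun t => f (a + t)) := by
  intro i hi
  have hi' : i < b - a := by rwa [length_sliceW w hab hb] at hi
  have h2 : a + i < w.length := by omega
  have := hf (a + i) h2
  rw [getElem_sliceW w hab hb]
  simpa [Nat.add_assoc] using this

def appendF (m : ℕ) (f g : ℕ → Q) : ℕ → Q := fun t => if t < m then f t else g (t - m)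

lemma NRun.appendF {M : NFA' Q A} {u v : List A} {f g : ℕ → Q} (hf : NRun M u f)
    (hg : NRun M v g) (hfg : f u.length = g 0) :
    NRun M (u ++ v) (_root_.NFAProof.appendF u.length f g) := by
  intro i hi
  rw [List.length_append] at hi
  unfold _root_.NFAProof.appendF
  rcases lt_trichotomy (i + 1) u.length with h1 | h1 | h1
  · have hiu : i < u.length := by omega
    simp only [if_pos h1, if_pos hiu]
    have := hf i hiu
    rwa [List.getElem_append_left hiu]
  · have hiu : i < u.length := by omega
    simp only [if_neg (by omega : ¬ i + 1 < u.length), if_pos hiu]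
    have := hf i hiu
    rw [List.getElem_append_left hiu]
    have h2 : i + 1 - u.length = 0 := by omega
    rw [h2, ← hfg, ← h1]
    exact this
  · have hiu : ¬ i < u.length := by omega
    simp only [if_neg (by omega : ¬ i + 1 < u.length), if_neg hiu]
    have hv : i - u.length < v.length := by omega
    have := hg (i - u.length) hv
    rw [List.getElem_append_right (by omega)]
    have h2 : i + 1 - u.length = (i - u.length) + 1 := by omega
    rw [h2]
    exact this

def Reach (M : NFA' Q A) (p r : Q) : Prop :=
  ∃ (w : List A) (f : ℕ → Q), NRun M w f ∧ f 0 = p ∧ f w.length = r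

lemma Reach.refl (M : NFA' Q A) (p : Q) : Reach M p p :=
  ⟨[], fun _ => p, fun i hi => by simp at hi, rfl, rfl⟩

lemma reach_of_nrun {M : NFA' Q A} {w : List A} {f : ℕ → Q} (hf : NRun M w f) {a b : ℕ}
    (hab : a ≤ b) (hb : b ≤ w.length) : Reach M (f a) (f b) := by
  refine ⟨sliceW w a b, fun t => f (a + t), hf.slice hab hb, by simp, ?_⟩
  rw [length_sliceW w hab hb]
  show f (a + (b - a)) = f b
  rw [Nat.add_sub_cancel' hab]

lemma Reach.trans {M : NFA' Q A} {p q r : Q} (h1 : Reach M p q) (h2 : Reach M q r) :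
    Reach M p r := by
  obtain ⟨u, f, hf, hf0, hfu⟩ := h1
  obtain ⟨v, g, hg, hg0, hgv⟩ := h2
  refine ⟨u ++ v, appendF u.length f g, hf.appendF hg (by rw [hfu, hg0]), ?_, ?_⟩
  · unfold appendF
    rcases Nat.eq_zero_or_pos u.length with h | h
    · rw [if_neg (by omega)]
      have : (0:ℕ) - u.length = 0 := by omega
      rw [this, hg0, ← hfu, h, hf0]
    · rw [if_pos h, hf0]
  · unfold appendF
    rw [List.length_append]
    simp only [if_neg (by omega : ¬ u.length + v.length < u.length)]
    rw [(by omega : u.length + v.length - u.length = v.length), hgv]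

/-- Convert a `Fin`-indexed run to an ℕ-indexed one. -/
def toF {m : ℕ} (ρ : Fin (m + 1) → Q) : ℕ → Q := fun i => ρ ⟨min i m, by omega⟩

lemma toF_eq {m : ℕ} (ρ : Fin (m + 1) → Q) {i : ℕ} (h : i ≤ m) :
    toF ρ i = ρ ⟨i, by omega⟩ := by
  simp [toF, Nat.min_eq_left h]

lemma runs_toF {M : NFA' Q A} {p r : Q} {w : List A} {ρ : Fin (w.length + 1) → Q}
    (hρ : ρ ∈ M.Runs p r w) :
    NRun M w (toF ρ) ∧ toF ρ 0 = p ∧ toF ρ w.length = r := by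
  obtain ⟨h0, hl, hr⟩ := hρ
  refine ⟨?_, ?_, ?_⟩
  · intro i hi
    have := hr ⟨i, hi⟩
    rw [toF_eq ρ (by omega), toF_eq ρ (by omega)]
    have e1 : (⟨i, hi⟩ : Fin w.length).succ = ⟨i + 1, by omega⟩ := rfl
    have e2 : (⟨i, hi⟩ : Fin w.length).castSucc = ⟨i, by omega⟩ := rfl
    rw [e1, e2] at this
    rwa [List.get_eq_getElem] at this
  · rw [toF_eq ρ (by omega)]
    convert h0 using 2
    ext; simp
  · rw [toF_eq ρ le_rfl]
    exact hl

def ofF (m : ℕ) (f : ℕ → Q) : Fin (m + 1) → Q := fun t => f t.val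

lemma ofF_mem_runs {M : NFA' Q A} {w : List A} {f : ℕ → Q} {p r : Q} (hf : NRun M w f)
    (h0 : f 0 = p) (hm : f w.length = r) : ofF w.length f ∈ M.Runs p r w := by
  refine ⟨h0, hm, ?_⟩
  intro i
  have := hf i.val i.isLt
  simpa [ofF, List.get_eq_getElem] using this

lemma reach_iff_runs {M : NFA' Q A} {p r : Q} :
    Reach M p r ↔ ∃ w : List A, (M.Runs p r w).Nonempty := by
  constructor
  · rintro ⟨w, f, hf, h0, hm⟩
    exact ⟨w, ofF w.length f, ofF_mem_runs hf h0 hm⟩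
  · rintro ⟨w, ρ, hρ⟩
    obtain ⟨hr, h0, hm⟩ := runs_toF hρ
    exact ⟨w, toF ρ, hr, h0, hm⟩

/-- The no-two-loop-pattern hypothesis. -/
def NoPat (M : NFA' Q A) : Prop :=
  ¬ ∃ (q q' : Q) (s : List A) (π₁ π₂ π₃ : Fin (s.length + 1) → Q),
      π₁ ∈ M.Runs q q s ∧ π₂ ∈ M.Runs q q' s ∧ π₁ ≠ π₂ ∧ π₃ ∈ M.Runs q' q' s ∧
      (∃ w : List A, (M.Runs M.q0 q w).Nonempty) ∧
      (∃ qr : Q, qr ∉ M.F ∧ ∃ v : List A, (M.Runs q' qr v).Nonempty)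

def CoAcc (M : NFA' Q A) (q : Q) : Prop := ∃ qr, qr ∉ M.F ∧ Reach M q qr

/-- Key uniqueness lemma: two runs between the same endpoints `p`, `r` with `r` reaching
back to `p` (with `p` accessible and co-accessible) must be equal. -/
lemma loop_unique {M : NFA' Q A} (hpat : NoPat M) {p r : Q}
    (hq0 : Reach M M.q0 p) (hco : CoAcc M p)
    {v : List A} {f g : ℕ → Q} (hf : NRun M v f) (hg : NRun M v g)
    (hf0 : f 0 = p) (hg0 : g 0 = p) (hfv : f v.length = r) (hgv : g v.length = r)
    (hrp : Reach M r p) {t : ℕ} (ht : t ≤ v.length) (hne : f t ≠ g t) : False := by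
  obtain ⟨u, hh, hu, hu0, huend⟩ := hrp
  have htv : t < v.length := by
    rcases Nat.lt_or_ge t v.length with h | h
    · exact h
    · exfalso; apply hne; have : t = v.length := by omega
      rw [this, hfv, hgv]
  set f' := appendF v.length f hh with hf'def
  set g' := appendF v.length g hh with hg'def
  have hf' : NRun M (v ++ u) f' := hf.appendF hu (by rw [hfv, hu0])
  have hg' : NRun M (v ++ u) g' := hg.appendF hu (by rw [hgv, hu0])
  have hlen : (v ++ u).length = v.length + u.length := List.length_append
  have hend : ∀ k : ℕ → Q, appendF v.length k hh (v.length + u.length) = p := by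
    intro k
    unfold appendF
    rw [if_neg (by omega)]
    rw [(by omega : v.length + u.length - v.length = u.length), huend]
  have h0f : f' 0 = p := by
    unfold f'; unfold appendF
    rcases Nat.eq_zero_or_pos v.length with h | h
    · rw [if_neg (by omega), (by omega : (0:ℕ) - v.length = 0), hu0, ← hfv, h, hf0]
    · rw [if_pos h, hf0]
  have h0g : g' 0 = p := by
    unfold g'; unfold appendF
    rcases Nat.eq_zero_or_pos v.length with h | h
    · rw [if_neg (by omega), (by omega : (0:ℕ) - v.length = 0), hu0, ← hgv, h, hg0]
    · rw [if_pos h, hg0]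
  have hmf : f' (v ++ u).length = p := by rw [hlen]; exact hend f
  have hmg : g' (v ++ u).length = p := by rw [hlen]; exact hend g
  have π₁mem := ofF_mem_runs hf' h0f hmf
  have π₂mem := ofF_mem_runs hg' h0g hmg
  have hneq : ofF (v ++ u).length f' ≠ ofF (v ++ u).length g' := by
    intro he
    have := congrFun he ⟨t, by rw [hlen]; omega⟩
    simp only [ofF] at this
    apply hne
    have e1 : f' t = f t := by unfold f'; unfold appendF; rw [if_pos htv]
    have e2 : g' t = g t := by unfold g'; unfold appendF; rw [if_pos htv]
    rw [← e1, ← e2]; exact this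
  exact hpat ⟨p, p, v ++ u, _, _, _, π₁mem, π₂mem, hneq, π₂mem,
    reach_iff_runs.mp hq0,
    hco.imp (fun qr hqr => ⟨hqr.1, reach_iff_runs.mp hqr.2⟩)⟩

open Classical in
/-- The list of "class-change" data of a run. -/
noncomputable def chgList (M : NFA' Q A) (w : List A) (f : ℕ → Q) : List (ℕ × (Q × Q)) :=
  (List.range w.length).filterMap (fun i =>
    if Reach M (f (i + 1)) (f i) then none else some (i, f i, f (i + 1)))

lemma mem_chgList {M : NFA' Q A} {w : List A} {f : ℕ → Q} {x : ℕ × (Q × Q)} :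
    x ∈ chgList M w f ↔
      x.1 < w.length ∧ ¬ Reach M (f (x.1 + 1)) (f x.1) ∧ x.2.1 = f x.1 ∧ x.2.2 = f (x.1 + 1) := by
  classical
  unfold chgList
  rw [List.mem_filterMap]
  constructor
  · rintro ⟨i, hi, hx⟩
    rw [List.mem_range] at hi
    by_cases hr : Reach M (f (i + 1)) (f i)
    · rw [if_pos hr] at hx; exact absurd hx (by simp)
    · rw [if_neg hr] at hx
      obtain rfl : (i, f i, f (i + 1)) = x := Option.some.inj hx
      exact ⟨hi, hr, rfl, rfl⟩
  · rintro ⟨h1, h2, h3, h4⟩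
    refine ⟨x.1, List.mem_range.mpr h1, ?_⟩
    rw [if_neg h2]
    obtain ⟨a, b, c⟩ := x
    simp only at h3 h4 ⊢
    rw [← h3, ← h4]

lemma chgList_pairwise (M : NFA' Q A) (w : List A) (f : ℕ → Q) :
    (chgList M w f).Pairwise (fun x y => x.1 < y.1) := by
  classical
  unfold chgList
  apply List.Pairwise.filterMap _ _ (List.pairwise_lt_range (n := w.length))
  intro a a' haa b hb b' hb'
  by_cases hr : Reach M (f (a + 1)) (f a)
  · rw [if_pos hr] at hb; exact absurd hb (by simp)
  by_cases hr' : Reach M (f (a' + 1)) (f a')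
  · rw [if_pos hr'] at hb'; exact absurd hb' (by simp)
  rw [if_neg hr] at hb; rw [if_neg hr'] at hb'
  obtain rfl := Option.some.inj hb
  obtain rfl := Option.some.inj hb'
  exact haa

lemma chgList_length_le [Fintype Q] {M : NFA' Q A} {w : List A} {f : ℕ → Q}
    (hf : NRun M w f) : (chgList M w f).length ≤ Fintype.card Q := by
  have hpw : (chgList M w f).Pairwise (fun x y => x.2.1 ≠ y.2.1) := by
    refine (chgList_pairwise M w f).imp_of_mem ?_
    intro x y hx hy hlt
    rw [mem_chgList] at hx hy
    intro he
    apply hx.2.1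
    have : Reach M (f (x.1 + 1)) (f y.1) :=
      reach_of_nrun hf (by omega) (by omega : y.1 ≤ w.length)
    rw [← hy.2.2.1, ← he, hx.2.2.1] at this
    exact this
  have hnd : ((chgList M w f).map (fun x => x.2.1)).Nodup :=
    (List.pairwise_map).mpr hpw
  calc (chgList M w f).length = ((chgList M w f).map (fun x => x.2.1)).length :=
        (List.length_map _).symm
    _ ≤ Fintype.card Q := hnd.length_le_card

lemma chain_back {M : NFA' Q A} {f : ℕ → Q} {a : ℕ} :
    ∀ b, a ≤ b → (∀ i, a ≤ i → i < b → Reach M (f (i + 1)) (f i)) → Reach M (f b) (f a) := by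
  intro b
  induction b with
  | zero =>
    intro hab _
    obtain rfl : a = 0 := by omega
    exact Reach.refl M (f 0)
  | succ n ih =>
    intro hab hstep
    rcases Nat.lt_or_ge a (n + 1) with h | h
    · have h1 : Reach M (f (n + 1)) (f n) := hstep n (by omega) (by omega)
      have h2 : Reach M (f n) (f a) := ih (by omega) (fun i hi hi' => hstep i hi (by omega))
      exact h1.trans h2
    · obtain rfl : a = n + 1 := by omega
      exact Reach.refl M (f (n + 1))

lemma chgList_inj {M : NFA' Q A} (hpat : NoPat M) {w : List A} {qr : Q} (hqr : qr ∉ M.F)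
    {ρ σ : Fin (w.length + 1) → Q} (hρ : ρ ∈ M.Runs M.q0 qr w) (hσ : σ ∈ M.Runs M.q0 qr w)
    (hD : chgList M w (toF ρ) = chgList M w (toF σ)) : ρ = σ := by
  classical
  obtain ⟨hFr, hF0, hFm⟩ := runs_toF hρ
  obtain ⟨hGr, hG0, hGm⟩ := runs_toF hσ
  by_contra hne
  have hPex : ∃ t, t ≤ w.length ∧ toF ρ t ≠ toF σ t := by
    obtain ⟨t, ht⟩ := Function.ne_iff.mp hne
    refine ⟨t.val, by omega, ?_⟩
    rw [toF_eq ρ (by omega), toF_eq σ (by omega)]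
    simpa [Fin.eta] using ht
  have hspec := Nat.find_spec hPex
  have hmin := fun t (ht : t < Nat.find hPex) => Nat.find_min hPex ht
  generalize hgen : Nat.find hPex = i₀ at hspec hmin
  obtain ⟨hi₀m, hi₀ne⟩ := hspec
  have hEqBelow : ∀ t, t < i₀ → toF ρ t = toF σ t := by
    intro t ht
    by_contra hc
    rcases Nat.lt_or_ge t (w.length + 1) with h | h
    · exact (hmin t ht) ⟨by omega, hc⟩
    · apply hc
      have e1 : toF ρ t = toF ρ w.length := by unfold toF; congr 1; omega
      have e2 : toF σ t = toF σ w.length := by unfold toF; congr 1; omega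
      rw [e1, e2, hFm, hGm]
  have hi₀pos : 1 ≤ i₀ := by
    rcases Nat.eq_zero_or_pos i₀ with h | h
    · exfalso; apply hi₀ne; rw [h, hF0, hG0]
    · exact h
  have hi₀lt : i₀ < w.length := by
    rcases Nat.lt_or_ge i₀ w.length with h | h
    · exact h
    · exfalso; apply hi₀ne
      have : i₀ = w.length := by omega
      rw [this, hFm, hGm]
  have hP2ex : ∃ t, i₀ ≤ t ∧ t ≤ w.length ∧ toF ρ t = toF σ t :=
    ⟨w.length, by omega, le_rfl, by rw [hFm, hGm]⟩
  have hspec2 := Nat.find_spec hP2ex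
  have hmin2 := fun t (ht : t < Nat.find hP2ex) => Nat.find_min hP2ex ht
  generalize hgen2 : Nat.find hP2ex = j₀ at hspec2 hmin2
  obtain ⟨hj₀i, hj₀m, hj₀eq⟩ := hspec2
  have hj₀gt : i₀ < j₀ := by
    rcases Nat.lt_or_ge i₀ j₀ with h | h
    · exact h
    · exfalso
      have : j₀ = i₀ := by omega
      rw [this] at hj₀eq
      exact hi₀ne hj₀eq
  have hNeBetween : ∀ t, i₀ ≤ t → t < j₀ → toF ρ t ≠ toF σ t := by
    intro t h1 h2 hc
    exact (hmin2 t h2) ⟨h1, by omega, hc⟩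
  have hnochg : ∀ i, i₀ - 1 ≤ i → i < j₀ →
      Reach M (toF ρ (i + 1)) (toF ρ i) ∧ Reach M (toF σ (i + 1)) (toF σ i) := by
    intro i h1 h2
    constructor
    · by_contra hc
      have hx : ((i, toF ρ i, toF ρ (i + 1)) : ℕ × Q × Q) ∈ chgList M w (toF ρ) :=
        mem_chgList.mpr ⟨by omega, hc, rfl, rfl⟩
      rw [hD] at hx
      obtain ⟨_, _, he1, he2⟩ := mem_chgList.mp hx
      simp only at he1 he2
      rcases Nat.lt_or_ge i i₀ with h | h
      · apply hi₀ne
        rw [(by omega : i₀ = i + 1), ← he2]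
      · exact hNeBetween i h h2 he1
    · by_contra hc
      have hx : ((i, toF σ i, toF σ (i + 1)) : ℕ × Q × Q) ∈ chgList M w (toF σ) :=
        mem_chgList.mpr ⟨by omega, hc, rfl, rfl⟩
      rw [← hD] at hx
      obtain ⟨_, _, he1, he2⟩ := mem_chgList.mp hx
      simp only at he1 he2
      rcases Nat.lt_or_ge i i₀ with h | h
      · apply hi₀ne
        rw [(by omega : i₀ = i + 1), he2]
      · exact (hNeBetween i h h2) he1.symm
  have hback : Reach M (toF ρ j₀) (toF ρ (i₀ - 1)) :=
    chain_back j₀ (by omega) (fun i h1 h2 => (hnochg i h1 h2).1)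
  have hvlen : (sliceW w (i₀ - 1) j₀).length = j₀ - (i₀ - 1) :=
    length_sliceW w (by omega) (by omega)
  have hagree : toF ρ (i₀ - 1) = toF σ (i₀ - 1) := hEqBelow _ (by omega)
  refine loop_unique hpat (p := toF ρ (i₀ - 1)) (r := toF ρ j₀) ?_ ?_
      (hFr.slice (a := i₀ - 1) (b := j₀) (by omega) (by omega))
      (hGr.slice (a := i₀ - 1) (b := j₀) (by omega) (by omega))
      ?_ ?_ ?_ ?_ hback (t := 1) (by rw [hvlen]; omega) ?_
  · rw [← hF0]; exact reach_of_nrun hFr (by omega) (by omega)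
  · exact ⟨qr, hqr, by rw [← hFm]; exact reach_of_nrun hFr (by omega) le_rfl⟩
  · show toF ρ (i₀ - 1 + 0) = toF ρ (i₀ - 1)
    rw [Nat.add_zero]
  · show toF σ (i₀ - 1 + 0) = toF ρ (i₀ - 1)
    rw [Nat.add_zero, hagree]
  · show toF ρ (i₀ - 1 + (sliceW w (i₀ - 1) j₀).length) = toF ρ j₀
    rw [hvlen]; congr 1; omega
  · show toF σ (i₀ - 1 + (sliceW w (i₀ - 1) j₀).length) = toF ρ j₀
    rw [hvlen, (by omega : i₀ - 1 + (j₀ - (i₀ - 1)) = j₀)]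
    exact hj₀eq.symm
  · show toF ρ (i₀ - 1 + 1) ≠ toF σ (i₀ - 1 + 1)
    rw [(by omega : i₀ - 1 + 1 = i₀)]
    exact hi₀ne

lemma headI_cons_tail {X : Type*} [Inhabited X] (l : List X) (h : l ≠ []) :
    l.headI :: l.tail = l := by
  cases l with
  | nil => exact absurd rfl h
  | cons a t => rfl

lemma tree_bound {St : Type*} [Fintype St] [Nonempty St] (r : ℕ) :
    ∀ (d : ℕ) (S : Finset (List (ℕ × St))),
    (∀ l ∈ S, l.length ≤ d) →
    (∀ π : List (ℕ × St), ¬ ∃ (es : Fin (r + 1) → ℕ × St) (ts : Fin (r + 1) → List (ℕ × St)),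
       (∀ j, π ++ es j :: ts j ∈ S) ∧ (∀ i j, i ≠ j → (es i).1 ≠ (es j).1)) →
    S.card ≤ (Fintype.card St * r + 1) ^ (d + 1) := by
  classical
  haveI : Inhabited St := Classical.inhabited_of_nonempty ‹Nonempty St›
  intro d
  induction d with
  | zero =>
    intro S hlen _
    have hsub : S ⊆ {[]} := by
      intro l hl
      rw [Finset.mem_singleton]
      exact List.length_eq_zero_iff.mp (Nat.le_zero.mp (hlen l hl))
    calc S.card ≤ ({[]} : Finset (List (ℕ × St))).card := Finset.card_le_card hsub
      _ = 1 := Finset.card_singleton _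
      _ ≤ _ := Nat.one_le_pow _ _ (by omega)
  | succ d ih =>
    intro S hlen hbr
    set E := Fintype.card St * r + 1 with hE
    have hcardSt : 1 ≤ Fintype.card St := Fintype.card_pos
    set P := S.filter (fun l => ¬ l = []) with hP
    have hsplit : S.card ≤ 1 + P.card := by
      have hsub : S ⊆ {[]} ∪ P := by
        intro l hl
        rw [Finset.mem_union, Finset.mem_singleton]
        by_cases hl0 : l = []
        · exact Or.inl hl0
        · exact Or.inr (Finset.mem_filter.mpr ⟨hl, hl0⟩)
      calc S.card ≤ ({[]} ∪ P).card := Finset.card_le_card hsub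
        _ ≤ ({([] : List (ℕ × St))} : Finset _).card + P.card := Finset.card_union_le _ _
        _ = 1 + P.card := by rw [Finset.card_singleton]
    set Hs := P.image (fun l => l.headI) with hHs
    have hmaps : ∀ l ∈ P, l.headI ∈ Hs := fun l hl => Finset.mem_image_of_mem _ hl
    have hHscard : Hs.card ≤ Fintype.card St * r := by
      by_contra hc
      push_neg at hc
      have hposs : Fintype.card St * r + 1 ≤ (Hs.image Prod.fst).card * Fintype.card St := by
        have h1 : Hs.card ≤ ((Hs.image Prod.fst) ×ˢ (Finset.univ : Finset St)).card := by
          apply Finset.card_le_card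
          intro x hx
          rw [Finset.mem_product]
          exact ⟨Finset.mem_image_of_mem _ hx, Finset.mem_univ _⟩
        rw [Finset.card_product, Finset.card_univ] at h1
        omega
      have hpc : r + 1 ≤ (Hs.image Prod.fst).card := by
        by_contra hc2
        push_neg at hc2
        have : (Hs.image Prod.fst).card * Fintype.card St ≤ r * Fintype.card St :=
          Nat.mul_le_mul_right _ (by omega)
        nlinarith
      obtain ⟨t, hts, htc⟩ := Finset.exists_subset_card_eq hpc
      set e := t.orderEmbOfFin htc with he
      have hxex : ∀ j : Fin (r + 1), ∃ x, x ∈ Hs ∧ x.1 = e j := by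
        intro j
        have : (e j : ℕ) ∈ Hs.image Prod.fst := hts (t.orderEmbOfFin_mem htc j)
        obtain ⟨x, hx1, hx2⟩ := Finset.mem_image.mp this
        exact ⟨x, hx1, hx2⟩
      choose x hx1 hx2 using hxex
      have hlex : ∀ j : Fin (r + 1), ∃ l, l ∈ P ∧ l.headI = x j := by
        intro j
        obtain ⟨l, hl1, hl2⟩ := Finset.mem_image.mp (hx1 j)
        exact ⟨l, hl1, hl2⟩
      choose l hl1 hl2 using hlex
      apply hbr []
      refine ⟨x, fun j => (l j).tail, ?_, ?_⟩
      · intro j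
        have hlP := hl1 j
        rw [hP, Finset.mem_filter] at hlP
        have : x j :: (l j).tail = l j := by
          rw [← hl2 j]; exact headI_cons_tail _ hlP.2
        rw [List.nil_append, this]
        exact hlP.1
      · intro i j hij hc3
        rw [hx2 i, hx2 j] at hc3
        exact hij (e.injective hc3)
    have hfib : P.card = ∑ x ∈ Hs, (P.filter (fun l => l.headI = x)).card :=
      Finset.card_eq_sum_card_fiberwise hmaps
    have hfibbound : ∀ x ∈ Hs, (P.filter (fun l => l.headI = x)).card ≤ E ^ (d + 1) := by
      intro x hx
      set Tx := (P.filter (fun l => l.headI = x)).image List.tail with hTx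
      have hcardeq : (P.filter (fun l => l.headI = x)).card = Tx.card := by
        rw [hTx]
        refine (Finset.card_image_of_injOn ?_).symm
        intro l1 h1 l2 h2 hteq
        rw [Finset.mem_coe, Finset.mem_filter, hP, Finset.mem_filter] at h1 h2
        rw [← headI_cons_tail l1 h1.1.2, ← headI_cons_tail l2 h2.1.2, h1.2, h2.2, hteq]
      have hlent : ∀ l ∈ Tx, l.length ≤ d := by
        intro l hl
        obtain ⟨l', hl', rfl⟩ := Finset.mem_image.mp hl
        rw [Finset.mem_filter, hP, Finset.mem_filter] at hl'
        have := hlen l' hl'.1.1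
        rw [← headI_cons_tail l' hl'.1.2] at this
        simp only [List.length_cons] at this
        simpa using (by omega : l'.tail.length ≤ d)
      have hbrt : ∀ π : List (ℕ × St),
          ¬ ∃ (es : Fin (r + 1) → ℕ × St) (ts : Fin (r + 1) → List (ℕ × St)),
          (∀ j, π ++ es j :: ts j ∈ Tx) ∧ (∀ i j, i ≠ j → (es i).1 ≠ (es j).1) := by
        rintro π ⟨es, ts, hmem, hinj⟩
        apply hbr (x :: π)
        refine ⟨es, ts, ?_, hinj⟩
        intro j
        obtain ⟨l', hl', hteq⟩ := Finset.mem_image.mp (hmem j)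
        rw [Finset.mem_filter, hP, Finset.mem_filter] at hl'
        have : l' = x :: (π ++ es j :: ts j) := by
          rw [← hteq, ← hl'.2]
          exact (headI_cons_tail l' hl'.1.2).symm
        rw [List.cons_append]
        rw [← this]
        exact hl'.1.1
      have := ih Tx hlent hbrt
      omega
    have hsum : P.card ≤ Hs.card * E ^ (d + 1) := by
      rw [hfib]
      calc ∑ x ∈ Hs, (P.filter (fun l => l.headI = x)).card
          ≤ ∑ _x ∈ Hs, E ^ (d + 1) := Finset.sum_le_sum hfibbound
        _ = Hs.card * E ^ (d + 1) := by rw [Finset.sum_const, smul_eq_mul]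
    have hpow : 1 ≤ E ^ (d + 1) := Nat.one_le_pow _ _ (by omega)
    calc S.card ≤ 1 + P.card := hsplit
      _ ≤ 1 + (Fintype.card St * r) * E ^ (d + 1) := by
          have := Nat.mul_le_mul_right (E ^ (d + 1)) hHscard
          omega
      _ ≤ E ^ (d + 1 + 1) := by
          have hxp : E ^ (d + 1 + 1) = (Fintype.card St * r) * E ^ (d + 1) + E ^ (d + 1) := by
            rw [pow_succ]
            nth_rewrite 2 [hE]
            ring
          omega

lemma tree_pigeonhole {St : Type*} [Fintype St] [Nonempty St] (r d : ℕ)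
    (S : Finset (List (ℕ × St))) (hlen : ∀ l ∈ S, l.length ≤ d)
    (hbig : (Fintype.card St * r + 1) ^ (d + 1) < S.card) :
    ∃ (π : List (ℕ × St)) (es : Fin (r + 1) → ℕ × St) (ts : Fin (r + 1) → List (ℕ × St)),
      (∀ j, π ++ es j :: ts j ∈ S) ∧ (∀ i j, i ≠ j → (es i).1 ≠ (es j).1) := by
  by_contra hc
  push_neg at hc
  have := tree_bound r d S hlen (fun π => by
    rintro ⟨es, ts, hmem, hinj⟩
    obtain ⟨i, j, hij, heq⟩ := hc π es ts hmem
    exact (hinj i j hij) heq)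
  omega


lemma ramsey_chain {κ : Type*} [Fintype κ] [Nonempty κ] (f : ℕ → ℕ → κ) (c : ℕ)
    (hcard : Fintype.card κ ≤ c) :
    ∀ (t : ℕ) (S : Finset ℕ), (c + 1) ^ t ≤ S.card →
    ∃ (v : Fin t → ℕ) (cl : Fin t → κ), (∀ i, v i ∈ S) ∧
      (∀ i j : Fin t, i < j → v i < v j ∧ f (v i) (v j) = cl i) := by
  classical
  intro t
  induction t with
  | zero =>
    intro S _
    exact ⟨Fin.elim0, Fin.elim0, fun i => i.elim0, fun i => i.elim0⟩
  | succ t ih =>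
    intro S hS
    have hc1 : 1 ≤ Fintype.card κ := Fintype.card_pos
    have hpow : 1 ≤ (c + 1) ^ t := Nat.one_le_pow _ _ (by omega)
    have hSne : S.Nonempty := Finset.card_pos.mp (by
      have : 1 ≤ (c + 1) ^ (t + 1) := Nat.one_le_pow _ _ (by omega)
      omega)
    have hS'card : S.card - 1 ≤ (S.erase (S.min' hSne)).card := by
      rw [Finset.card_erase_of_mem (S.min'_mem hSne)]
    have hps : (c + 1) ^ (t + 1) = c * (c + 1) ^ t + (c + 1) ^ t := by
      rw [pow_succ]; ring
    have hmul : (Finset.univ : Finset κ).card * ((c + 1) ^ t)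
        ≤ (S.erase (S.min' hSne)).card := by
      rw [Finset.card_univ]
      have h2 : Fintype.card κ * ((c + 1) ^ t) ≤ c * ((c + 1) ^ t) :=
        Nat.mul_le_mul_right _ hcard
      omega
    obtain ⟨col, _, hcol⟩ := Finset.exists_le_card_fiber_of_mul_le_card_of_maps_to
      (f := fun a => f (S.min' hSne) a) (t := (Finset.univ : Finset κ))
      (fun a _ => Finset.mem_univ _) Finset.univ_nonempty hmul
    set v₀ := S.min' hSne with hv₀
    set B := (S.erase v₀).filter (fun a => f v₀ a = col) with hB
    have hBcard : (c + 1) ^ t ≤ B.card := hcol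
    obtain ⟨v', cl', hmem', hpair'⟩ := ih B hBcard
    refine ⟨Fin.cases v₀ v', Fin.cases col cl', ?_, ?_⟩
    · intro i
      refine Fin.cases ?_ ?_ i
      · exact S.min'_mem hSne
      · intro i'
        have := hmem' i'
        rw [hB, Finset.mem_filter] at this
        exact Finset.mem_of_mem_erase this.1
    · intro i j hij
      refine Fin.cases (motive := fun i => i < j →
          Fin.cases (motive := fun _ => ℕ) v₀ v' i < Fin.cases (motive := fun _ => ℕ) v₀ v' j ∧
          f (Fin.cases (motive := fun _ => ℕ) v₀ v' i) (Fin.cases (motive := fun _ => ℕ) v₀ v' j)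
            = Fin.cases (motive := fun _ => κ) col cl' i) ?_ ?_ i hij
      · intro h0j
        obtain ⟨j', rfl⟩ : ∃ j', j = j'.succ :=
          ⟨j.pred (Fin.pos_iff_ne_zero.mp h0j), (Fin.succ_pred _ _).symm⟩
        simp only [Fin.cases_zero, Fin.cases_succ]
        have hmB := hmem' j'
        rw [hB, Finset.mem_filter] at hmB
        constructor
        · have h1 : v' j' ∈ S := Finset.mem_of_mem_erase hmB.1
          have h2 : v' j' ≠ v₀ := Finset.ne_of_mem_erase hmB.1
          exact lt_of_le_of_ne (S.min'_le _ h1) (Ne.symm h2)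
        · exact hmB.2
      · intro i' hij'
        have hj0 : j ≠ 0 := Fin.pos_iff_ne_zero.mp (lt_trans (Fin.succ_pos i') hij')
        obtain ⟨j', rfl⟩ : ∃ j', j = j'.succ := ⟨j.pred hj0, (Fin.succ_pred _ _).symm⟩
        simp only [Fin.cases_succ]
        exact hpair' i' j' (by
          have := hij'
          rwa [Fin.succ_lt_succ_iff] at this)

lemma ramsey5 {κ : Type*} [Fintype κ] [Nonempty κ] (f : ℕ → ℕ → κ) :
    ∃ (u : Fin 5 → ℕ) (col : κ),
      (∀ i, u i < (Fintype.card κ + 1) ^ (4 * Fintype.card κ + 1)) ∧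
      (∀ i j : Fin 5, i < j → u i < u j) ∧ (∀ i j : Fin 5, i < j → f (u i) (u j) = col) := by
  classical
  obtain ⟨v, cl, hmem, hpair⟩ := ramsey_chain f (Fintype.card κ) le_rfl
    (4 * Fintype.card κ + 1)
    (Finset.range ((Fintype.card κ + 1) ^ (4 * Fintype.card κ + 1)))
    (by rw [Finset.card_range])
  have hmul : (Finset.univ : Finset κ).card * 4
      < (Finset.univ : Finset (Fin (4 * Fintype.card κ + 1))).card := by
    rw [Finset.card_univ, Finset.card_univ, Fintype.card_fin]
    omega
  obtain ⟨col, _, hcol⟩ := Finset.exists_lt_card_fiber_of_mul_lt_card_of_maps_to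
    (f := cl) (t := (Finset.univ : Finset κ)) (fun a _ => Finset.mem_univ _) hmul
  obtain ⟨T, hTs, hTc⟩ := Finset.exists_subset_card_eq hcol
  refine ⟨fun i => v (T.orderEmbOfFin hTc i), col, ?_, ?_, ?_⟩
  · intro i
    have := hmem (T.orderEmbOfFin hTc i)
    rwa [Finset.mem_range] at this
  · intro i j hij
    exact (hpair _ _ ((T.orderEmbOfFin hTc).strictMono hij)).1
  · intro i j hij
    have h1 := (hpair _ _ ((T.orderEmbOfFin hTc).strictMono hij)).2
    have h2 : cl (T.orderEmbOfFin hTc i) = col := by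
      have := hTs (T.orderEmbOfFin_mem hTc i)
      rw [Finset.mem_filter] at this
      exact this.2
    rw [h1, h2]

lemma window {M : NFA' Q A} {w : List A} {f : ℕ → Q} (hf : NRun M w f) {b e : ℕ} {qs : Q}
    (hb : f b = qs) (hem : e < w.length)
    (hnc : ∀ i, b ≤ i → i < e → Reach M (f (i + 1)) (f i)) :
    ∀ i, b ≤ i → i ≤ e → Reach M (f i) qs ∧ Reach M qs (f i) := by
  intro i
  induction i with
  | zero =>
    intro h1 _
    obtain rfl : b = 0 := by omega
    rw [hb]
    exact ⟨Reach.refl M qs, Reach.refl M qs⟩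
  | succ n ih =>
    intro h1 h2
    by_cases hbn : b = n + 1
    · rw [← hbn, hb]
      exact ⟨Reach.refl M qs, Reach.refl M qs⟩
    · obtain ⟨r1, r2⟩ := ih (by omega) (by omega)
      have fwd : Reach M (f n) (f (n + 1)) := reach_of_nrun hf (Nat.le_succ n) (by omega)
      have bck : Reach M (f (n + 1)) (f n) := hnc n (by omega) (by omega)
      exact ⟨bck.trans r1, r2.trans fwd⟩

end NFAProof

open NFAProof in
/-- If a finite-state NFA has no pair of states `q`, `q'` with the two-loop pattern
(a loop `π₁` at `q`, a run `π₂` from `q` to `q'` with `π₁ ≠ π₂`, and a loop `π₃` at `q'`,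
all with the same label `s`, where `q` is reachable from `q0` and `q'` can reach a
non-accepting state), then the number of runs from `q0` to any non-accepting state
labeled by any word is uniformly bounded by a constant. -/
theorem bounded_runs_of_not_vulnerable {Q A : Type*} [Finite Q] (M : NFA' Q A)
    (h : ¬ ∃ (q q' : Q) (s : List A) (π₁ π₂ π₃ : Fin (s.length + 1) → Q),
      π₁ ∈ M.Runs q q s ∧ π₂ ∈ M.Runs q q' s ∧ π₁ ≠ π₂ ∧ π₃ ∈ M.Runs q' q' s ∧
      (∃ w : List A, (M.Runs M.q0 q w).Nonempty) ∧
      (∃ qr : Q, qr ∉ M.F ∧ ∃ v : List A, (M.Runs q' qr v).Nonempty)) :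
    ∃ C : ℕ, ∀ (w : List A) (qr : Q), qr ∉ M.F →
      (M.Runs M.q0 qr w).encard ≤ (C : ℕ∞) := by
  classical
  letI : Fintype Q := Fintype.ofFinite Q
  haveI : Nonempty Q := ⟨M.q0⟩
  have hpat : NoPat M := h
  obtain ⟨c, hc⟩ : ∃ c, c = Fintype.card (Q × Q) := ⟨_, rfl⟩
  obtain ⟨n, hn⟩ : ∃ n, n = Fintype.card Q := ⟨_, rfl⟩
  refine ⟨(c * ((c + 1) ^ (4 * c + 1)) + 1) ^ (n + 1), ?_⟩
  intro w qr hqr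
  by_contra hle
  rw [not_le] at hle
  have hfin : (M.Runs M.q0 qr w).Finite := Set.toFinite _
  rw [hfin.encard_eq_coe_toFinset_card] at hle
  have hK : (c * ((c + 1) ^ (4 * c + 1)) + 1) ^ (n + 1) < hfin.toFinset.card := by
    exact_mod_cast hle
  -- the change-data map is injective on runs
  have hinj : Set.InjOn (fun ρ : Fin (w.length + 1) → Q => chgList M w (toF ρ)) ↑hfin.toFinset := by
    intro ρ hρ σ hσ hD
    rw [Finset.mem_coe, Set.Finite.mem_toFinset] at hρ hσ
    exact chgList_inj hpat hqr hρ hσ hD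
  have hcard : ((hfin.toFinset).image (fun ρ : Fin (w.length + 1) → Q => chgList M w (toF ρ))).card
      = hfin.toFinset.card := Finset.card_image_of_injOn hinj
  have hlen : ∀ l ∈ (hfin.toFinset).image (fun ρ : Fin (w.length + 1) → Q => chgList M w (toF ρ)), l.length ≤ n := by
    intro l hl
    obtain ⟨ρ, hρ, rfl⟩ := Finset.mem_image.mp hl
    rw [Set.Finite.mem_toFinset] at hρ
    rw [hn]
    exact chgList_length_le (runs_toF hρ).1
  -- extract a diagonal family via the tree pigeonhole
  set R := (c + 1) ^ (4 * c + 1) with hR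
  obtain ⟨π, es, ts, hmem, hposinj⟩ := tree_pigeonhole (St := Q × Q)
    R n ((hfin.toFinset).image (fun ρ : Fin (w.length + 1) → Q => chgList M w (toF ρ)))
    hlen (by rw [hcard, ← hc]; exact hK)
  -- pick the runs behind each data list
  have hrun : ∀ j : Fin (R + 1), ∃ ρ, ρ ∈ M.Runs M.q0 qr w ∧
      chgList M w (toF ρ) = π ++ es j :: ts j := by
    intro j
    obtain ⟨ρ, hρ, hD⟩ := Finset.mem_image.mp (hmem j)
    rw [Set.Finite.mem_toFinset] at hρ
    exact ⟨ρ, hρ, hD⟩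
  choose ρf hρf hDf using hrun
  -- sort the change positions
  have hpinj : Function.Injective (fun j : Fin (R + 1) => (es j).1) := by
    intro i j hij
    by_contra hne
    exact hposinj i j hne hij
  have hPcard : (Finset.univ.image (fun j : Fin (R + 1) => (es j).1)).card = R + 1 := by
    rw [Finset.card_image_of_injective _ hpinj, Finset.card_univ, Fintype.card_fin]
  have hψ : ∀ k : Fin (R + 1), ∃ j : Fin (R + 1),
      (es j).1 = (Finset.univ.image (fun j : Fin (R + 1) => (es j).1)).orderEmbOfFin hPcard k := by
    intro k
    have := Finset.orderEmbOfFin_mem _ hPcard k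
    obtain ⟨j, _, hj⟩ := Finset.mem_image.mp this
    exact ⟨j, hj⟩
  choose ψ hψeq using hψ
  -- notation
  set a : Fin (R + 1) → ℕ :=
    fun k => (Finset.univ.image (fun j : Fin (R + 1) => (es j).1)).orderEmbOfFin hPcard k with ha
  have hamono : ∀ {k l : Fin (R + 1)}, k < l → a k < a l := by
    intro k l hkl
    exact (Finset.orderEmbOfFin _ hPcard).strictMono hkl
  set G : Fin (R + 1) → ℕ → Q := fun k => toF (ρf (ψ k)) with hG
  have hGrun : ∀ k, NRun M w (G k) := fun k => (runs_toF (hρf (ψ k))).1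
  have hG0 : ∀ k, G k 0 = M.q0 := fun k => (runs_toF (hρf (ψ k))).2.1
  have hGm : ∀ k, G k w.length = qr := fun k => (runs_toF (hρf (ψ k))).2.2
  have hDk : ∀ k, chgList M w (G k) = π ++ es (ψ k) :: ts (ψ k) := fun k => hDf (ψ k)
  have haek : ∀ k, (es (ψ k)).1 = a k := fun k => hψeq k
  -- fact A : a genuine change happens at position `a k`
  have hA : ∀ k, a k < w.length ∧ ¬ Reach M (G k (a k + 1)) (G k (a k)) := by
    intro k
    have hm : es (ψ k) ∈ chgList M w (G k) := by
      rw [hDk k]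
      exact List.mem_append_right _ List.mem_cons_self
    obtain ⟨h1, h2, _, _⟩ := mem_chgList.mp hm
    rw [haek k] at h1 h2
    exact ⟨h1, h2⟩
  have hsort : ∀ k, (π ++ es (ψ k) :: ts (ψ k)).Pairwise (fun x y => x.1 < y.1) := by
    intro k
    rw [← hDk k]
    exact chgList_pairwise M w (G k)
  -- base point of the common window
  obtain ⟨b, qs, hbase, hble, hnochg⟩ :
      ∃ (b : ℕ) (qs : Q), (∀ k, G k b = qs) ∧ (∀ k, b ≤ a k) ∧
        (∀ k i, b ≤ i → i < a k → Reach M (G k (i + 1)) (G k i)) := by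
    by_cases hπ : π = []
    · refine ⟨0, M.q0, fun k => hG0 k, fun k => Nat.zero_le _, ?_⟩
      intro k i _ hia
      by_contra hre
      have hm : ((i, G k i, G k (i + 1)) : ℕ × Q × Q) ∈ chgList M w (G k) :=
        mem_chgList.mpr ⟨by have := (hA k).1; omega, hre, rfl, rfl⟩
      rw [hDk k, hπ, List.nil_append] at hm
      rcases List.mem_cons.mp hm with he | hts
      · have hieq : (es (ψ k)).1 = i := by rw [← he]
        rw [haek k] at hieq
        omega
      · have := List.pairwise_cons.mp ((hπ ▸ hsort k) : ((es (ψ k) :: ts (ψ k)).Pairwise _))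
        have hlt := this.1 _ hts
        simp only at hlt
        rw [haek k] at hlt
        omega
    · set y := π.getLast hπ with hy
      have hysplit : π.dropLast ++ [y] = π := List.dropLast_append_getLast hπ
      have hymem : y ∈ π := List.getLast_mem hπ
      have hyval : ∀ k, G k (y.1 + 1) = y.2.2 := by
        intro k
        have hm : y ∈ chgList M w (G k) := by
          rw [hDk k]
          exact List.mem_append_left _ hymem
        obtain ⟨_, _, _, h4⟩ := mem_chgList.mp hm
        exact h4.symm
      have hya : ∀ k, y.1 < a k := by
        intro k
        have hp := (List.pairwise_append.mp (hsort k)).2.2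
        have := hp y hymem (es (ψ k)) List.mem_cons_self
        rwa [haek k] at this
      refine ⟨y.1 + 1, y.2.2, hyval, fun k => hya k, ?_⟩
      intro k i hbi hia
      by_contra hre
      have hm : ((i, G k i, G k (i + 1)) : ℕ × Q × Q) ∈ chgList M w (G k) :=
        mem_chgList.mpr ⟨by have := (hA k).1; omega, hre, rfl, rfl⟩
      rw [hDk k] at hm
      rcases List.mem_append.mp hm with hpi | hcons
      · -- the change is inside π : impossible, π's positions are < y.1 + 1 ≤ i
        rw [← hysplit] at hpi
        rcases List.mem_append.mp hpi with hdl | hsing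
        · have hpw : π.Pairwise (fun x y => x.1 < y.1) := (List.pairwise_append.mp (hsort k)).1
          rw [← hysplit] at hpw
          have := (List.pairwise_append.mp hpw).2.2 _ hdl y (List.mem_singleton_self y)
          simp only at this
          omega
        · rw [List.mem_singleton] at hsing
          have hieq : y.1 = i := by rw [← hsing]
          omega
      · rcases List.mem_cons.mp hcons with he | hts
        · have hieq : (es (ψ k)).1 = i := by rw [← he]
          rw [haek k] at hieq
          omega
        · have hp2 := List.pairwise_cons.mp (List.pairwise_append.mp (hsort k)).2.1
          have hlt := hp2.1 _ hts
          simp only at hlt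
          rw [haek k] at hlt
          omega
  -- inside the window the run stays in the class of qs
  have hwin : ∀ k i, b ≤ i → i ≤ a k → Reach M (G k i) qs ∧ Reach M qs (G k i) :=
    fun k => window (hGrun k) (hbase k) (hA k).1 (hnochg k)
  -- beyond its change, a run has left the class of qs
  have hout : ∀ k p, a k < p → p ≤ w.length → ¬ Reach M (G k p) qs := by
    intro k p hap hpm hre
    apply (hA k).2
    have h1 : Reach M (G k (a k + 1)) (G k p) := reach_of_nrun (hGrun k) (by omega) hpm
    have h2 : Reach M qs (G k (a k)) := (hwin k (a k) (hble k) le_rfl).2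
    exact (h1.trans hre).trans h2
  -- Ramsey
  obtain ⟨u, col, hub, humono, hucol⟩ := ramsey5 (κ := Q × Q)
    (fun l l' => if hl : l < R + 1 ∧ l' < R + 1 then
      (G ⟨l', hl.2⟩ (a ⟨l, hl.1⟩), G ⟨l, hl.1⟩ (a ⟨l', hl.2⟩)) else (M.q0, M.q0))
  have hub' : ∀ i, u i < R + 1 := by
    intro i
    have := hub i
    rw [← hc, ← hR] at this
    omega
  set K : Fin 5 → Fin (R + 1) := fun i => ⟨u i, hub' i⟩ with hKdef
  have hKmono : ∀ {i j : Fin 5}, i < j → K i < K j := by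
    intro i j hij
    exact humono i j hij
  have hcolval : ∀ i j : Fin 5, i < j →
      G (K j) (a (K i)) = col.1 ∧ G (K i) (a (K j)) = col.2 := by
    intro i j hij
    have := hucol i j hij
    rw [dif_pos ⟨hub' i, hub' j⟩] at this
    exact ⟨congrArg Prod.fst this, congrArg Prod.snd this⟩
  obtain ⟨x, y⟩ := col
  simp only at hcolval
  -- key positions
  have hAB : a (K 1) < a (K 3) := hamono (hKmono (by decide))
  have hBm : a (K 3) < w.length := (hA (K 3)).1
  have hAm : a (K 1) ≤ w.length := by omega
  -- x and y are distinct
  have hxy : x ≠ y := by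
    intro hxyeq
    have hx : Reach M (G (K 4) (a (K 1))) qs := by
      refine (hwin (K 4) (a (K 1)) (hble (K 1)) ?_).1
      exact le_of_lt (hamono (hKmono (by decide)))
    have hy : ¬ Reach M (G (K 0) (a (K 1))) qs :=
      hout (K 0) (a (K 1)) (hamono (hKmono (by decide))) hAm
    rw [(hcolval 1 4 (by decide)).1] at hx
    rw [(hcolval 0 1 (by decide)).2] at hy
    rw [hxyeq] at hx
    exact hy hx
  -- build the three runs on the slice
  have hslen : (sliceW w (a (K 1)) (a (K 3))).length = a (K 3) - a (K 1) :=
    length_sliceW w (le_of_lt hAB) (by omega)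
  have hend : ∀ k : Fin (R + 1),
      G k (a (K 1) + (sliceW w (a (K 1)) (a (K 3))).length) = G k (a (K 3)) := by
    intro k
    rw [hslen]
    congr 1
    omega
  have hπ1 : ofF (sliceW w (a (K 1)) (a (K 3))).length (fun t => G (K 4) (a (K 1) + t)) ∈
      M.Runs x x (sliceW w (a (K 1)) (a (K 3))) := by
    refine ofF_mem_runs ((hGrun (K 4)).slice (le_of_lt hAB) (by omega)) ?_ ?_
    · show G (K 4) (a (K 1) + 0) = x
      rw [Nat.add_zero]
      exact (hcolval 1 4 (by decide)).1
    · show G (K 4) (a (K 1) + _) = x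
      rw [hend (K 4)]
      exact (hcolval 3 4 (by decide)).1
  have hπ2 : ofF (sliceW w (a (K 1)) (a (K 3))).length (fun t => G (K 2) (a (K 1) + t)) ∈
      M.Runs x y (sliceW w (a (K 1)) (a (K 3))) := by
    refine ofF_mem_runs ((hGrun (K 2)).slice (le_of_lt hAB) (by omega)) ?_ ?_
    · show G (K 2) (a (K 1) + 0) = x
      rw [Nat.add_zero]
      exact (hcolval 1 2 (by decide)).1
    · show G (K 2) (a (K 1) + _) = y
      rw [hend (K 2)]
      exact (hcolval 2 3 (by decide)).2
  have hπ3 : ofF (sliceW w (a (K 1)) (a (K 3))).length (fun t => G (K 0) (a (K 1) + t)) ∈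
      M.Runs y y (sliceW w (a (K 1)) (a (K 3))) := by
    refine ofF_mem_runs ((hGrun (K 0)).slice (le_of_lt hAB) (by omega)) ?_ ?_
    · show G (K 0) (a (K 1) + 0) = y
      rw [Nat.add_zero]
      exact (hcolval 0 1 (by decide)).2
    · show G (K 0) (a (K 1) + _) = y
      rw [hend (K 0)]
      exact (hcolval 0 3 (by decide)).2
  have hne12 : ofF (sliceW w (a (K 1)) (a (K 3))).length (fun t => G (K 4) (a (K 1) + t)) ≠
      ofF (sliceW w (a (K 1)) (a (K 3))).length (fun t => G (K 2) (a (K 1) + t)) := by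
    intro heq
    apply hxy
    have := congrFun heq (Fin.last _)
    simp only [ofF, Fin.val_last] at this
    calc x = G (K 4) (a (K 1) + (sliceW w (a (K 1)) (a (K 3))).length) := by
            rw [hend (K 4)]; exact ((hcolval 3 4 (by decide)).1).symm
      _ = G (K 2) (a (K 1) + (sliceW w (a (K 1)) (a (K 3))).length) := this
      _ = y := by rw [hend (K 2)]; exact (hcolval 2 3 (by decide)).2
  -- assemble the forbidden pattern
  apply hpat
  refine ⟨x, y, sliceW w (a (K 1)) (a (K 3)), _, _, _, hπ1, hπ2, hne12, hπ3, ?_, ?_⟩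
  · apply reach_iff_runs.mp
    have : Reach M (G (K 4) 0) (G (K 4) (a (K 1))) :=
      reach_of_nrun (hGrun (K 4)) (Nat.zero_le _) hAm
    rw [hG0 (K 4), (hcolval 1 4 (by decide)).1] at this
    exact this
  · refine ⟨qr, hqr, ?_⟩
    apply reach_iff_runs.mp
    have : Reach M (G (K 0) (a (K 3))) (G (K 0) w.length) :=
      reach_of_nrun (hGrun (K 0)) (by omega) le_rfl
    rw [hGm (K 0), (hcolval 0 3 (by decide)).2] at this
    exact this
end
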